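/- arXiv:cs/0601036 — 5 statements merged into one kernel-verified Lean document; each statement's English description precedes it below -/
import Mathlib

section
/- Let D be a nonempty finite set of forbidden patterns, let m be the maximal length of the patterns in D, and let M be the sum of the lengths of the patterns in D. If there exists an admissible word for D, then there exists an admissible word for D of length at most 2M + 2m. -/
/-- The integer value of a binary symbol. -/
def boolToInt (b : Bool) : ℤ := if b then 1 else 0

/-- Componentwise difference of two binary words, a word over `{-1, 0, +1}`. -/
def diffWord (u v : List Bool) : List ℤ :=
  List.zipWith (fun a b => boolToInt a - boolToInt b) u v

/-- A forbidden pattern: a nonempty finite word over the alphabet `{-1, 0, +1}`. -/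
def IsPattern (p : List ℤ) : Prop :=
  p ≠ [] ∧ ∀ x ∈ p, x = -1 ∨ x = 0 ∨ x = 1

/-- A code `C` of binary words avoids the forbidden set `D` if no difference of two
distinct code words contains a pattern of `D` as a contiguous subword (factor). -/
def AvoidsCode (D : Finset (List ℤ)) (C : Finset (List Bool)) : Prop :=
  ∀ u ∈ C, ∀ v ∈ C, u ≠ v → ∀ p ∈ D, ¬ p <:+: diffWord u v

/-- `delta D n` : the maximal cardinality of a code of binary words of length `n`
avoiding the forbidden set `D`. -/
noncomputable def delta (D : Finset (List ℤ)) (n : ℕ) : ℕ :=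
  sSup {k : ℕ | ∃ C : Finset (List Bool),
    (∀ u ∈ C, u.length = n) ∧ AvoidsCode D C ∧ C.card = k}

/-- The capacity of a set of forbidden difference patterns. -/
noncomputable def cap (D : Finset (List ℤ)) : ℝ :=
  Filter.limsup (fun n : ℕ => Real.logb 2 (delta D n) / n) Filter.atTop

/-- A word `w` over `{-1,0,+1}` is admissible for `D` (with `m` the maximal pattern
length): it has prefix `0^m`, suffix `+0^{m-1}`, and contains no element of
`D ∪ (-D)` as a factor. -/
def Admissible (D : Finset (List ℤ)) (m : ℕ) (w : List ℤ) : Prop :=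
  (∀ x ∈ w, x = -1 ∨ x = 0 ∨ x = 1) ∧
  List.replicate m (0:ℤ) <+: w ∧
  ((1:ℤ) :: List.replicate (m - 1) (0:ℤ)) <:+ w ∧
  ∀ p ∈ D, ¬ p <:+: w ∧ ¬ (p.map (fun x => -x)) <:+: w


-- suffix of suffix with length
theorem suffix_of_suffix_length_le {α : Type*} {s t l : List α}
    (h1 : s <:+ l) (h2 : t <:+ l) (h : s.length ≤ t.length) : s <:+ t := by
  rw [← List.reverse_prefix] at h1 h2 ⊢
  exact List.prefix_of_prefix_length_le h1 h2 (by simpa using h)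

theorem suffix_append_prefix_infix {α : Type*} {s t x y : List α}
    (h1 : s <:+ x) (h2 : t <+: y) : (s ++ t) <:+: (x ++ y) := by
  obtain ⟨u, rfl⟩ := h1
  obtain ⟨v, rfl⟩ := h2
  exact ⟨u, v, by simp⟩

theorem infix_append_split {α : Type*} {q a b : List α} (h : q <:+: a ++ b) :
    q <:+: a ∨ q <:+: b ∨
    ∃ s t, q = s ++ t ∧ s ≠ [] ∧ s <:+ a ∧ t <+: b := by
  obtain ⟨u, v, huv⟩ := h
  have hpre : q <+: (a ++ b).drop u.length := by
    rw [← huv, show u ++ q ++ v = u ++ (q ++ v) by simp, List.drop_left]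
    exact ⟨v, rfl⟩
  by_cases hk1 : a.length ≤ u.length
  · right; left
    have : (a ++ b).drop u.length = b.drop (u.length - a.length) := by
      rw [List.drop_append, List.drop_eq_nil_of_le hk1, List.nil_append]
    rw [this] at hpre
    exact hpre.isInfix.trans (List.drop_suffix _ _).isInfix
  · push_neg at hk1
    by_cases hk2 : u.length + q.length ≤ a.length
    · left
      have hq : q = ((a ++ b).drop u.length).take q.length :=
        (List.prefix_iff_eq_take.mp hpre)
      rw [List.take_drop, List.take_append_of_le_length hk2] at hq
      rw [hq]
      exact ((List.drop_suffix _ _).isInfix.trans (List.take_prefix _ _).isInfix)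
    · push_neg at hk2
      right; right
      refine ⟨q.take (a.length - u.length), q.drop (a.length - u.length),
        (List.take_append_drop _ _).symm, ?_, ?_, ?_⟩
      · intro hnil
        have := congrArg List.length hnil
        simp only [List.length_take, List.length_nil] at this
        omega
      · -- q.take (a.length - u.length) = a.drop u.length
        have h1 : q.take (a.length - u.length) <+: ((a ++ b).drop u.length).take (a.length - u.length) :=
          List.IsPrefix.take hpre _
        rw [List.take_drop, show u.length + (a.length - u.length) = a.length by omega,
          List.take_append_of_le_length (le_refl _), List.take_length] at h1
        have hlen : (q.take (a.length - u.length)).length = (a.drop u.length).length := by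
          simp only [List.length_take, List.length_drop]
          omega
        rw [h1.eq_of_length hlen]
        exact List.drop_suffix _ _
      · -- q.drop (a.length - u.length) <+: b
        have h2 : q.drop (a.length - u.length) <+: ((a ++ b).drop u.length).drop (a.length - u.length) :=
          List.IsPrefix.drop hpre _
        rwa [List.drop_drop, show u.length + (a.length - u.length) = a.length by omega,
          List.drop_left] at h2

theorem splice_admissible (D : Finset (List ℤ)) (m : ℕ) (hm1 : 1 ≤ m)
    (w : List ℤ) (hw : Admissible D m w)
    (i j : ℕ) (hi : m ≤ i) (hij : i < j) (hj : j + m ≤ w.length)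
    (hstate : ∀ q ∈ D ∪ D.image (List.map (fun x : ℤ => -x)), ∀ r, r + 1 ≤ q.length →
        q.take (r+1) <:+ w.take i → q.take (r+1) <:+ w.take j) :
    Admissible D m (w.take i ++ w.drop j) ∧ (w.take i ++ w.drop j).length < w.length := by
  classical
  obtain ⟨hsym, hpre, hsuf, havoid⟩ := hw
  have hQ : ∀ q ∈ D ∪ D.image (List.map (fun x : ℤ => -x)), ¬ q <:+: w := by
    intro q hq
    rcases Finset.mem_union.mp hq with h | h
    · exact (havoid q h).1
    · obtain ⟨p, hp, rfl⟩ := Finset.mem_image.mp h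
      exact (havoid p hp).2
  have hiw : i ≤ w.length := by omega
  have hleni : (w.take i).length = i := by simp [List.length_take]; omega
  -- no forbidden factor in the spliced word
  have hQ' : ∀ q ∈ D ∪ D.image (List.map (fun x : ℤ => -x)), ¬ q <:+: (w.take i ++ w.drop j) := by
    intro q hq hinf
    rcases infix_append_split hinf with h | h | ⟨s, t, hst, hs_ne, hs_suf, ht_pre⟩
    · exact hQ q hq (h.trans (List.take_prefix i w).isInfix)
    · exact hQ q hq (h.trans (List.drop_suffix j w).isInfix)
    · -- crossing occurrence
      have hslen : 1 ≤ s.length := by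
        cases s with
        | nil => exact absurd rfl hs_ne
        | cons x l => simp
      have hsq : s.length ≤ q.length := by rw [hst]; simp
      have htake : q.take s.length = s := by rw [hst, List.take_left]
      have hs_i : q.take ((s.length - 1) + 1) <:+ w.take i := by
        rw [show s.length - 1 + 1 = s.length by omega, htake]; exact hs_suf
      have hs_j := hstate q hq (s.length - 1) (by omega) hs_i
      rw [show s.length - 1 + 1 = s.length by omega, htake] at hs_j
      have : (s ++ t) <:+: (w.take j ++ w.drop j) := by
        obtain ⟨u, hu⟩ := hs_j
        obtain ⟨v, hv⟩ := ht_pre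
        exact ⟨u, v, by rw [← hu, ← hv]; simp⟩
      rw [List.take_append_drop, ← hst] at this
      exact hQ q hq this
  refine ⟨⟨?_, ?_, ?_, ?_⟩, ?_⟩
  · intro x hx
    rcases List.mem_append.mp hx with h | h
    · exact hsym x (List.take_subset i w h)
    · exact hsym x (List.drop_subset j w h)
  · -- prefix of zeros
    rw [List.prefix_iff_eq_take] at hpre ⊢
    rw [List.length_replicate] at hpre ⊢
    rw [List.take_append_of_le_length (by omega : m ≤ (w.take i).length),
      List.take_take, min_eq_left hi]
    exact hpre
  · -- suffix
    have hlen : ((1:ℤ) :: List.replicate (m - 1) (0:ℤ)).length ≤ (w.drop j).length := by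
      simp [List.length_replicate, List.length_drop]; omega
    exact (suffix_of_suffix_length_le hsuf (List.drop_suffix j w) hlen).trans
      (List.suffix_append _ _)
  · intro p hp
    exact ⟨hQ' p (Finset.mem_union_left _ hp),
      hQ' _ (Finset.mem_union_right _ (Finset.mem_image_of_mem _ hp))⟩
  · simp only [List.length_append, List.length_take, List.length_drop]
    omega

theorem nat_sum_union_le {α : Type*} [DecidableEq α] (A B : Finset α) (f : α → ℕ) :
    ∑ x ∈ A ∪ B, f x ≤ ∑ x ∈ A, f x + ∑ x ∈ B, f x := by
  rw [← Finset.union_sdiff_self_eq_union, Finset.sum_union Finset.sdiff_disjoint.symm]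
  exact add_le_add_right (Finset.sum_le_sum_of_subset (Finset.sdiff_subset)) _

theorem shorten (D : Finset (List ℤ)) (m : ℕ) (hm1 : 1 ≤ m)
    (M : ℕ) (hM : M = ∑ p ∈ D, p.length)
    (w : List ℤ) (hw : Admissible D m w) (hlong : 2 * M + 2 * m < w.length) :
    ∃ w'' : List ℤ, Admissible D m w'' ∧ w''.length < w.length := by
  classical
  set Q := D ∪ D.image (List.map (fun x : ℤ => -x)) with hQdef
  set P := Q.biUnion (fun q => (Finset.range q.length).image (fun r => q.take (r+1))) with hPdef
  have hPcard : P.card ≤ 2 * M := by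
    calc P.card ≤ ∑ q ∈ Q, ((Finset.range q.length).image (fun r => q.take (r+1))).card :=
          Finset.card_biUnion_le
      _ ≤ ∑ q ∈ Q, q.length := by
          refine Finset.sum_le_sum fun q _ => ?_
          calc ((Finset.range q.length).image (fun r => q.take (r+1))).card
              ≤ (Finset.range q.length).card := Finset.card_image_le
            _ = q.length := Finset.card_range _
      _ ≤ (∑ q ∈ D, q.length) + ∑ q ∈ D.image (List.map (fun x : ℤ => -x)), q.length :=
          nat_sum_union_le _ _ _
      _ ≤ M + M := by
          rw [hM]
          refine add_le_add_right (le_of_eq ?_) _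
          rw [Finset.sum_image (fun x _ y _ h =>
            (List.map_injective_iff.mpr (fun a b => neg_inj.mp)) h)]
          simp [List.length_map]
      _ = 2 * M := by ring
  set f : ℕ → Option (List ℤ) :=
    fun i => ((P.filter fun s => s <:+ w.take i).toList.argmax List.length) with hfdef
  -- key monotonicity property from equal states
  have key : ∀ i j : ℕ, f i = f j → ∀ s ∈ P, s <:+ w.take i → s <:+ w.take j := by
    intro i j hf s hsP hsi
    have hsmem : s ∈ P.filter fun s => s <:+ w.take i := Finset.mem_filter.mpr ⟨hsP, hsi⟩
    have hsl : s ∈ (P.filter fun s => s <:+ w.take i).toList := Finset.mem_toList.mpr hsmem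
    obtain ⟨t, ht⟩ : ∃ t, f i = some t := by
      cases h : f i with
      | none =>
        rw [hfdef] at h
        simp only at h
        rw [List.argmax_eq_none.mp h] at hsl
        simp at hsl
      | some t => exact ⟨t, rfl⟩
    have ht' : t ∈ (P.filter fun s => s <:+ w.take i).toList.argmax List.length := by
      rw [hfdef] at ht; exact ht
    have htl := List.argmax_mem ht'
    have htmem := Finset.mem_toList.mp htl
    have hti : t <:+ w.take i := (Finset.mem_filter.mp htmem).2
    have hslen : s.length ≤ t.length := List.le_of_mem_argmax hsl ht'
    have hst : s <:+ t := suffix_of_suffix_length_le hsi hti hslen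
    have htj : f j = some t := by rw [← hf]; exact ht
    have htj' : t ∈ (P.filter fun s => s <:+ w.take j).toList.argmax List.length := htj
    have htj2 : t <:+ w.take j := (Finset.mem_filter.mp (Finset.mem_toList.mp
      (List.argmax_mem htj'))).2
    exact hst.trans htj2
  -- membership of states in a small finite set
  have hmaps : ∀ i ∈ Finset.Icc m (w.length - m), f i ∈ insert none (P.image some) := by
    intro i _
    cases h : f i with
    | none => exact Finset.mem_insert_self _ _
    | some t =>
      have ht' : t ∈ (P.filter fun s => s <:+ w.take i).toList.argmax List.length := h
      have := (Finset.mem_filter.mp (Finset.mem_toList.mp (List.argmax_mem ht'))).1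
      exact Finset.mem_insert_of_mem (Finset.mem_image_of_mem some this)
  have hcard : (insert none (P.image some)).card < (Finset.Icc m (w.length - m)).card := by
    have h1 : (insert none (P.image some)).card ≤ P.card + 1 := by
      calc (insert none (P.image some)).card ≤ (P.image some).card + 1 :=
            Finset.card_insert_le _ _
        _ ≤ P.card + 1 := by exact add_le_add_left Finset.card_image_le _
    rw [Nat.card_Icc]
    omega
  obtain ⟨i, hiIcc, j, hjIcc, hne, hfeq⟩ :=
    Finset.exists_ne_map_eq_of_card_lt_of_maps_to hcard hmaps
  simp only [Finset.mem_Icc] at hiIcc hjIcc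
  -- state hypothesis for the splice, in either order
  have hstate : ∀ i' j' : ℕ, f i' = f j' →
      (∀ q ∈ D ∪ D.image (List.map (fun x : ℤ => -x)), ∀ r, r + 1 ≤ q.length →
        q.take (r+1) <:+ w.take i' → q.take (r+1) <:+ w.take j') := by
    intro i' j' hf q hq r hr hsuf
    refine key i' j' hf _ ?_ hsuf
    rw [hPdef]
    exact Finset.mem_biUnion.mpr ⟨q, hQdef ▸ hq,
      Finset.mem_image.mpr ⟨r, Finset.mem_range.mpr (by omega), rfl⟩⟩
  rcases lt_or_gt_of_ne hne with hij | hij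
  · obtain ⟨ha, hl⟩ := splice_admissible D m hm1 w hw i j hiIcc.1 hij (by omega)
      (hstate i j hfeq)
    exact ⟨_, ha, hl⟩
  · obtain ⟨ha, hl⟩ := splice_admissible D m hm1 w hw j i hjIcc.1 hij (by omega)
      (hstate j i hfeq.symm)
    exact ⟨_, ha, hl⟩

/-- if an admissible word exists, then one of length at most `2M + 2m`
exists, where `m` is the maximal pattern length and `M` the sum of pattern lengths. -/
theorem short_admissible_word (D : Finset (List ℤ)) (hDne : D.Nonempty)
    (hD : ∀ p ∈ D, IsPattern p) (m : ℕ)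
    (hm : (∃ p ∈ D, p.length = m) ∧ ∀ p ∈ D, p.length ≤ m)
    (M : ℕ) (hM : M = ∑ p ∈ D, p.length)
    (w : List ℤ) (hw : Admissible D m w) :
    ∃ w' : List ℤ, Admissible D m w' ∧ w'.length ≤ 2 * M + 2 * m := by
  classical
  obtain ⟨⟨p₀, hp₀D, hp₀len⟩, _⟩ := hm
  have hm1 : 1 ≤ m := by
    rw [← hp₀len]
    exact List.length_pos_iff.mpr (hD p₀ hp₀D).1
  suffices H : ∀ n : ℕ, ∀ w : List ℤ, w.length ≤ n → Admissible D m w →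
      ∃ w' : List ℤ, Admissible D m w' ∧ w'.length ≤ 2 * M + 2 * m from
    H w.length w le_rfl hw
  intro n
  induction n with
  | zero => intro w hl hw; exact ⟨w, hw, by omega⟩
  | succ n ih =>
    intro w hl hw
    by_cases hle : w.length ≤ 2 * M + 2 * m
    · exact ⟨w, hw, hle⟩
    · push_neg at hle
      obtain ⟨w'', hw'', hlen''⟩ := shorten D m hm1 M hM w hw hle
      exact ih w'' (by omega) hw''
end

section
/- Let D be a nonempty finite set of forbidden patterns, let m be the maximal length of the patterns in D, and let M be the sum of the lengths of the patterns in D. If cap(D) > 0, then cap(D) ≥ 1/(2M + m). -/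
namespace PCLB
open List

/-! ### Generic list infrastructure -/

abbrev zeros (a : ℕ) : List ℤ := List.replicate a 0

def Zpad (a : ℕ) (y : List ℤ) (b : ℕ) : List ℤ := zeros a ++ y ++ zeros b


lemma zpad_infix_zpad {a' b' a b : ℕ} (y : List ℤ) (ha : a' ≤ a) (hb : b' ≤ b) :
    Zpad a' y b' <:+: Zpad a y b := by
  refine ⟨zeros (a - a'), zeros (b - b'), ?_⟩
  unfold Zpad zeros
  have h1 : (a - a') + a' = a := by omega
  have h2 : b' + (b - b') = b := by omega
  calc List.replicate (a - a') (0:ℤ) ++ (List.replicate a' 0 ++ y ++ List.replicate b' 0) ++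
        List.replicate (b - b') 0
      = List.replicate ((a - a') + a') (0:ℤ) ++ y ++ List.replicate (b' + (b - b')) 0 := by
        simp only [List.replicate_add, List.append_assoc]
    _ = List.replicate a (0:ℤ) ++ y ++ List.replicate b 0 := by rw [h1, h2]

lemma infix_iff_suffix_of_prefix {α : Type*} {p l : List α} :
    p <:+: l ↔ ∃ l', l' <+: l ∧ p <:+ l' := by
  constructor
  · rintro ⟨s, t, rfl⟩
    exact ⟨s ++ p, ⟨t, by simp [List.append_assoc]⟩, ⟨s, rfl⟩⟩
  · rintro ⟨l', ⟨t, rfl⟩, ⟨s, rfl⟩⟩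
    exact ⟨s, t, rfl⟩

lemma infix_append_left_or {α : Type*} {p x z : List α} (hp : p ≠ []) (h : p <:+: x ++ z) :
    p <:+: x ++ z.take (p.length - 1) ∨ p <:+: z := by
  obtain ⟨s, t, hst⟩ := h
  have hp1 : 1 ≤ p.length := List.length_pos_iff.mpr hp
  rcases le_or_gt x.length s.length with hle | hlt
  · right
    have hd := congrArg (List.drop x.length) hst
    rw [List.append_assoc, List.drop_append_of_le_length hle, List.drop_left] at hd
    rw [← List.append_assoc] at hd
    exact ⟨s.drop x.length, t, hd⟩
  · left
    set c := x.length + p.length - 1 with hc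
    have h2 : (s ++ p) <+: (x ++ z).take c :=
      List.prefix_take_iff.mpr ⟨⟨t, hst⟩, by simp; omega⟩
    have h3 : (x ++ z).take c = x ++ z.take (p.length - 1) := by
      rw [List.take_append, List.take_of_length_le (by omega)]
      congr 2
      omega
    rw [h3] at h2
    exact infix_iff_suffix_of_prefix.mpr ⟨s ++ p, h2, ⟨s, rfl⟩⟩

lemma infix_append_right_or {α : Type*} {p x z : List α} (hp : p ≠ []) (h : p <:+: x ++ z) :
    p <:+: x ∨ p <:+: x.drop (x.length - (p.length - 1)) ++ z := by
  obtain ⟨s, t, hst⟩ := h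
  have hp1 : 1 ≤ p.length := List.length_pos_iff.mpr hp
  rcases le_or_gt (s.length + p.length) x.length with hle | hlt
  · left
    have h2 : (s ++ p) <+: (x ++ z).take x.length :=
      List.prefix_take_iff.mpr ⟨⟨t, hst⟩, by simp; omega⟩
    rw [List.take_left] at h2
    exact infix_iff_suffix_of_prefix.mpr ⟨s ++ p, h2, ⟨s, rfl⟩⟩
  · right
    set d := x.length - (p.length - 1) with hd
    have hds : d ≤ s.length := by omega
    have h1 := congrArg (List.drop d) hst
    rw [List.append_assoc, List.drop_append_of_le_length hds,
      List.drop_append_of_le_length (by omega : d ≤ x.length)] at h1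
    rw [← List.append_assoc] at h1
    exact ⟨s.drop d, t, h1⟩

lemma all_zero_of_infix_zeros {p : List ℤ} {a : ℕ} (h : p <:+: zeros a) : ∀ x ∈ p, x = 0 :=
  fun x hx => List.eq_of_mem_replicate (h.subset hx)

lemma prefix_append_cases {α : Type*} {l' x z : List α} (h : l' <+: x ++ z) :
    l' <+: x ∨ ∃ z0, z0 <+: z ∧ l' = x ++ z0 := by
  rcases List.prefix_or_prefix_of_prefix h (⟨z, rfl⟩ : x <+: x ++ z) with h1 | h1
  · exact Or.inl h1
  · obtain ⟨z0, rfl⟩ := h1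
    obtain ⟨r, hr⟩ := h
    right
    refine ⟨z0, ⟨r, ?_⟩, rfl⟩
    have := hr
    rw [List.append_assoc] at this
    exact (List.append_cancel_left this)

lemma suffix_of_suffix_length_le {α : Type*} {t s x : List α} (ht : t <:+ x) (hs : s <:+ x)
    (h : t.length ≤ s.length) : t <:+ s := by
  obtain ⟨a, rfl⟩ := hs
  obtain ⟨b, hb⟩ := ht
  have hlen : a.length ≤ b.length := by
    have := congrArg List.length hb
    simp at this
    omega
  have h1 := congrArg (List.drop a.length) hb
  rw [List.drop_append_of_le_length hlen, List.drop_left] at h1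
  exact ⟨b.drop a.length, h1⟩

lemma infix_zpad_reduce {p y : List ℤ} {a b : ℕ} (hp : p ≠ []) (hnz : ∃ x ∈ p, x ≠ 0)
    (h : p <:+: Zpad a y b) :
    ∃ a' ≤ p.length - 1, ∃ b' ≤ p.length - 1, p <:+: Zpad a' y b' := by
  obtain ⟨x0, hx0, hx0ne⟩ := hnz
  have h' : p <:+: zeros a ++ (y ++ zeros b) := by
    simpa [Zpad, List.append_assoc] using h
  rcases infix_append_right_or hp h' with h1 | h1
  · exact absurd (all_zero_of_infix_zeros h1 x0 hx0) hx0ne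
  · rw [List.drop_replicate] at h1
    set a' := a - (a - (p.length - 1)) with ha'
    have ha'le : a' ≤ p.length - 1 := by omega
    have h'' : p <:+: (zeros a' ++ y) ++ zeros b := by
      simpa [List.append_assoc] using h1
    rcases infix_append_left_or hp h'' with h2 | h2
    · rw [List.take_replicate] at h2
      refine ⟨a', ha'le, min (p.length - 1) b, min_le_left _ _, ?_⟩
      simpa [Zpad, List.append_assoc] using h2
    · exact absurd (all_zero_of_infix_zeros h2 x0 hx0) hx0ne

/-! ### Patterns, cleanliness -/

variable (D : Finset (List ℤ))

def Pset : Finset (List ℤ) := D ∪ D.image (List.map (fun x => -x))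

def Clean (l : List ℤ) : Prop := ∀ p ∈ Pset D, ¬ p <:+: l

def Inv (y : List ℤ) : Prop :=
  (∃ x ∈ y, x ≠ 0) ∧ (∀ x ∈ y, x = -1 ∨ x = 0 ∨ x = 1) ∧ ∀ a b, Clean D (Zpad a y b)

variable {D}

lemma neg_mem_Pset {p : List ℤ} (hp : p ∈ Pset D) : p.map (fun x => -x) ∈ Pset D := by
  simp only [Pset, Finset.mem_union, Finset.mem_image] at hp ⊢
  rcases hp with h | ⟨q, hq, rfl⟩
  · exact Or.inr ⟨p, h, rfl⟩
  · left
    simpa [List.map_map, Function.comp_def] using hq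

lemma map_neg_map_neg (y : List ℤ) : (y.map (fun x => -x)).map (fun x => -x) = y := by
  simp [List.map_map, Function.comp_def]

lemma clean_mono {l l' : List ℤ} (h : l' <:+: l) (hc : Clean D l) : Clean D l' :=
  fun p hp hinf => hc p hp (hinf.trans h)

lemma Pset_ne_nil (hD : ∀ p ∈ D, IsPattern p) {p : List ℤ} (hp : p ∈ Pset D) : p ≠ [] := by
  simp only [Pset, Finset.mem_union, Finset.mem_image] at hp
  rcases hp with h | ⟨q, hq, rfl⟩
  · exact (hD p h).1
  · simpa using (hD q hq).1

lemma Pset_length_le {m : ℕ} (hm : ∀ p ∈ D, p.length ≤ m) {p : List ℤ}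
    (hp : p ∈ Pset D) : p.length ≤ m := by
  simp only [Pset, Finset.mem_union, Finset.mem_image] at hp
  rcases hp with h | ⟨q, hq, rfl⟩
  · exact hm p h
  · simpa using hm q hq

/-- If a word padded with `m` zeros on both sides is clean, all paddings are clean. -/
lemma clean_pad_all {m : ℕ} (hD : ∀ p ∈ D, IsPattern p) (hm : ∀ p ∈ D, p.length ≤ m)
    (hnz : ∀ p ∈ Pset D, ∃ x ∈ p, x ≠ 0) {y : List ℤ}
    (h : Clean D (Zpad m y m)) : ∀ a b, Clean D (Zpad a y b) := by
  intro a b p hp hinf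
  obtain ⟨a', ha', b', hb', h2⟩ :=
    infix_zpad_reduce (Pset_ne_nil hD hp) (hnz p hp) hinf
  have hlp : p.length ≤ m := Pset_length_le hm hp
  exact h p hp (h2.trans (zpad_infix_zpad y (by omega) (by omega)))

/-! ### The longest-matched-prefix automaton -/

variable (D) in
def Pref : Finset (List ℤ) := (Pset D).biUnion (fun p => p.inits.toFinset)

lemma mem_Pref {l : List ℤ} : l ∈ Pref D ↔ ∃ p ∈ Pset D, l <+: p := by
  simp [Pref, List.mem_inits]

lemma nil_mem_Pref (hDne : D.Nonempty) : ([] : List ℤ) ∈ Pref D := by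
  obtain ⟨p, hp⟩ := hDne
  exact mem_Pref.mpr ⟨p, by simp [Pset, Finset.mem_union, hp], List.nil_prefix⟩

lemma mem_Pref_of_prefix {l l' : List ℤ} (h : l' <+: l) (hl : l ∈ Pref D) : l' ∈ Pref D := by
  obtain ⟨p, hp, hlp⟩ := mem_Pref.mp hl
  exact mem_Pref.mpr ⟨p, hp, h.trans hlp⟩

lemma self_mem_Pref {p : List ℤ} (hp : p ∈ Pset D) : p ∈ Pref D :=
  mem_Pref.mpr ⟨p, hp, List.prefix_refl p⟩

variable (D) in
noncomputable def st (x : List ℤ) : List ℤ :=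
  ((x.tails.filter (fun t => decide (t ∈ Pref D))).argmax List.length).getD []

lemma st_spec (hDne : D.Nonempty) (x : List ℤ) :
    st D x ∈ Pref D ∧ st D x <:+ x ∧
      ∀ t, t <:+ x → t ∈ Pref D → t <:+ st D x := by
  classical
  set F := x.tails.filter (fun t => decide (t ∈ Pref D)) with hF
  have hnilF : ([] : List ℤ) ∈ F := by
    rw [hF, List.mem_filter]
    exact ⟨(List.mem_tails _ _).mpr (List.nil_suffix), by simpa using nil_mem_Pref hDne⟩
  have hFne : F ≠ [] := List.ne_nil_of_mem hnilF
  obtain ⟨mx, hmx⟩ : ∃ mx, F.argmax List.length = some mx := by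
    rcases Option.eq_none_or_eq_some (F.argmax List.length) with h | h
    · exact absurd (List.argmax_eq_none.mp h) hFne
    · exact h
  have hst : st D x = mx := by unfold st; rw [← hF, hmx]; rfl
  have hmem : mx ∈ F := List.argmax_mem hmx
  rw [hF, List.mem_filter] at hmem
  have hmxPref : mx ∈ Pref D := by simpa using hmem.2
  have hmxsuf : mx <:+ x := (List.mem_tails _ _).mp hmem.1
  refine ⟨hst ▸ hmxPref, hst ▸ hmxsuf, ?_⟩
  intro t ht htP
  rw [hst]
  have htF : t ∈ F := by
    rw [hF, List.mem_filter]
    exact ⟨(List.mem_tails _ _).mpr ht, by simpa using htP⟩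
  exact suffix_of_suffix_length_le ht hmxsuf (List.le_of_mem_argmax htF hmx)

lemma st_unique (hDne : D.Nonempty) {x s : List ℤ} (h1 : s ∈ Pref D) (h2 : s <:+ x)
    (h3 : ∀ t, t <:+ x → t ∈ Pref D → t <:+ s) : st D x = s := by
  obtain ⟨hP, hsuf, hmax⟩ := st_spec hDne x
  exact ((h3 _ hsuf hP).sublist).antisymm ((hmax s h2 h1).sublist)

lemma st_append_singleton (hDne : D.Nonempty) (x : List ℤ) (c : ℤ) :
    st D (x ++ [c]) = st D (st D x ++ [c]) := by
  obtain ⟨hP, hsuf, hmax⟩ := st_spec hDne x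
  obtain ⟨hP', hsuf', hmax'⟩ := st_spec hDne (st D x ++ [c])
  have key : ∀ t, t ∈ Pref D → t <:+ x ++ [c] → t <:+ st D x ++ [c] := by
    intro t htP ht
    rcases eq_or_ne t [] with rfl | htne
    · exact List.nil_suffix
    · obtain ⟨a, ha⟩ := ht
      have hrev : t.reverse ++ a.reverse = c :: x.reverse := by
        rw [← List.reverse_append, ha]
        simp
      obtain ⟨h0, t0, ht0⟩ := List.exists_cons_of_ne_nil
        (fun hh : t.reverse = [] => htne (by simpa using congrArg List.reverse hh))
      rw [ht0] at hrev
      simp only [List.cons_append, List.cons.injEq] at hrev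
      obtain ⟨hc0, hrev2⟩ := hrev
      have ht' : t = t0.reverse ++ [c] := by
        have h := congrArg List.reverse ht0
        simp at h
        rw [← hc0]
        exact h
      have ht0x : t0.reverse <:+ x := by
        refine ⟨a, ?_⟩
        have := congrArg List.reverse hrev2
        simpa using this
      have ht0P : t0.reverse ∈ Pref D :=
        mem_Pref_of_prefix (by rw [ht']; exact ⟨[c], rfl⟩) htP
      obtain ⟨a', ha'⟩ := hmax _ ht0x ht0P
      rw [ht']
      exact ⟨a', by rw [← List.append_assoc, ha']⟩
  refine st_unique hDne hP' ?_ ?_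
  · obtain ⟨a, ha⟩ := hsuf
    exact hsuf'.trans ⟨a, by rw [← List.append_assoc, ha]⟩
  · intro t ht htP
    exact hmax' t (key t htP ht) htP

lemma st_append (hDne : D.Nonempty) {x x' : List ℤ} (h : st D x = st D x') :
    ∀ z, st D (x ++ z) = st D (x' ++ z) := by
  intro z
  induction z generalizing x x' with
  | nil => simpa using h
  | cons c z ih =>
    rw [show x ++ c :: z = (x ++ [c]) ++ z by simp, show x' ++ c :: z = (x' ++ [c]) ++ z by simp]
    apply ih
    rw [st_append_singleton hDne, h, ← st_append_singleton hDne]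

lemma suffix_iff_suffix_st (hDne : D.Nonempty) {p x : List ℤ} (hp : p ∈ Pset D) :
    p <:+ x ↔ p <:+ st D x := by
  obtain ⟨hP, hsuf, hmax⟩ := st_spec hDne x
  exact ⟨fun h => hmax p h (self_mem_Pref hp), fun h => h.trans hsuf⟩

lemma clean_transfer (hDne : D.Nonempty) {x x' z : List ℤ} (hst : st D x = st D x')
    (hx : Clean D x) (hx' : Clean D (x' ++ z)) : Clean D (x ++ z) := by
  intro p hp hinf
  rcases infix_iff_suffix_of_prefix.mp hinf with ⟨l', hl', hsuf⟩
  rcases prefix_append_cases hl' with h1 | ⟨z0, hz0, rfl⟩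
  · exact hx p hp (hsuf.isInfix.trans h1.isInfix)
  · have h2 : p <:+ st D (x ++ z0) := (suffix_iff_suffix_st hDne hp).mp hsuf
    rw [st_append hDne hst z0] at h2
    have h3 : p <:+ x' ++ z0 := (suffix_iff_suffix_st hDne hp).mpr h2
    obtain ⟨r, hr⟩ := hz0
    have h4 : (x' ++ z0) <+: x' ++ z := ⟨r, by rw [List.append_assoc, hr]⟩
    exact hx' p hp (h3.isInfix.trans h4.isInfix)

lemma card_Pref_le {M : ℕ} (hM : M = ∑ p ∈ D, p.length) :
    (Pref D).card ≤ 2 * M + 1 := by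
  classical
  have hsub : Pref D ⊆ insert ([] : List ℤ)
      ((Pset D).biUnion (fun p => p.inits.toFinset.erase [])) := by
    intro l hl
    rcases eq_or_ne l [] with rfl | hne
    · exact Finset.mem_insert_self _ _
    · refine Finset.mem_insert_of_mem ?_
      rw [Pref, Finset.mem_biUnion] at hl
      obtain ⟨p, hp, hlp⟩ := hl
      exact Finset.mem_biUnion.mpr ⟨p, hp, Finset.mem_erase.mpr ⟨hne, hlp⟩⟩
  have h1 : (Pref D).card ≤ 1 + ∑ p ∈ Pset D, (p.inits.toFinset.erase ([] : List ℤ)).card := by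
    have hA := Finset.card_le_card hsub
    have hB := Finset.card_insert_le ([] : List ℤ)
      ((Pset D).biUnion (fun p => p.inits.toFinset.erase ([] : List ℤ)))
    have hC := Finset.card_biUnion_le (s := Pset D)
      (t := fun p => p.inits.toFinset.erase ([] : List ℤ))
    omega
  have h2 : ∀ p : List ℤ, (p.inits.toFinset.erase ([] : List ℤ)).card ≤ p.length := by
    intro p
    have hmem : ([] : List ℤ) ∈ p.inits.toFinset := by
      simp [List.mem_inits]
    rw [Finset.card_erase_of_mem hmem]
    have := List.toFinset_card_le p.inits
    rw [List.length_inits] at this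
    omega
  have h3 : ∑ p ∈ Pset D, (p.inits.toFinset.erase ([] : List ℤ)).card ≤
      ∑ p ∈ Pset D, p.length := Finset.sum_le_sum (fun p _ => h2 p)
  have h4 : ∑ p ∈ Pset D, p.length ≤ 2 * M := by
    have h5 : ∑ p ∈ D ∪ D.image (List.map (fun x : ℤ => -x)), p.length ≤
        ∑ p ∈ D, p.length + ∑ p ∈ D.image (List.map (fun x : ℤ => -x)), p.length := by
      have := Finset.sum_union_inter (s₁ := D) (s₂ := D.image (List.map (fun x : ℤ => -x)))
        (f := fun p : List ℤ => p.length)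
      omega
    have h6 : ∑ p ∈ D.image (List.map (fun x : ℤ => -x)), p.length = ∑ p ∈ D, p.length := by
      rw [Finset.sum_image]
      · simp
      · intro a _ b _ hab
        exact List.map_injective_iff.mpr neg_injective hab
    rw [Pset]
    omega
  omega

/-! ### The pumping argument -/

lemma pump_cut (hDne : D.Nonempty) (hD : ∀ p ∈ D, IsPattern p) {m M N : ℕ}
    (hmub : ∀ p ∈ D, p.length ≤ m)
    (hnz : ∀ p ∈ Pset D, ∃ x ∈ p, x ≠ 0)
    (hrec : ∀ z : List ℤ, z.length ≤ N → Inv D z → ∃ y', Inv D y' ∧ y'.length ≤ 2 * M + 1)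
    {yy : List ℤ} (hyne : yy ≠ [])
    (hh0 : yy.head hyne ≠ 0) (hl0 : yy.getLast hyne ≠ 0)
    (hI : Inv D yy) (hlenN : yy.length ≤ N + 1)
    (hkbig : 2 * M + 2 ≤ yy.length)
    {i i' : ℕ} (hii : i < i') (hi'ub : i' < 2 * M + 2)
    (heq : st D (zeros m ++ yy.take i) = st D (zeros m ++ yy.take i')) :
    ∃ y', Inv D y' ∧ y'.length ≤ 2 * M + 1 := by
  set y' := yy.take i ++ yy.drop i' with hy'
  have hy'len : y'.length ≤ N := by
    simp only [hy', List.length_append, List.length_take, List.length_drop]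
    omega
  have hclean_m : ∀ b, Clean D (Zpad m y' b) := by
    intro b
    have hx : Clean D (zeros m ++ yy.take i) := by
      have hcl := hI.2.2 m 0
      have hz0 : Zpad m yy 0 = zeros m ++ yy := by simp [Zpad, zeros]
      rw [hz0] at hcl
      have hpre : zeros m ++ yy.take i <+: zeros m ++ yy :=
        ⟨yy.drop i, by rw [List.append_assoc, List.take_append_drop]⟩
      exact clean_mono hpre.isInfix hcl
    have hx' : Clean D ((zeros m ++ yy.take i') ++ (yy.drop i' ++ zeros b)) := by
      have hEq : (zeros m ++ yy.take i') ++ (yy.drop i' ++ zeros b) = Zpad m yy b := by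
        unfold Zpad
        simp only [List.append_assoc]
        rw [← List.append_assoc (yy.take i') (yy.drop i'), List.take_append_drop]
      rw [hEq]
      exact hI.2.2 m b
    have htrans := clean_transfer hDne heq hx hx'
    have hEq2 : (zeros m ++ yy.take i) ++ (yy.drop i' ++ zeros b) = Zpad m y' b := by
      unfold Zpad
      simp only [hy', List.append_assoc]
    rw [hEq2] at htrans
    exact htrans
  refine hrec y' hy'len ⟨?_, ?_, clean_pad_all hD hmub hnz (hclean_m m)⟩
  · rcases Nat.eq_zero_or_pos i with rfl | hipos
    · have hdropne : yy.drop i' ≠ [] := by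
        have : (yy.drop i').length = yy.length - i' := List.length_drop
        intro h
        rw [h] at this
        simp at this
        omega
      have h1 : (yy.drop i').getLast? = yy.getLast? := by
        conv_rhs => rw [← List.take_append_drop i' yy]
        rw [List.getLast?_append, List.getLast?_eq_getLast hdropne]
        simp
      rw [List.getLast?_eq_getLast hdropne, List.getLast?_eq_getLast hyne] at h1
      have h2 := Option.some.inj h1
      refine ⟨yy.getLast hyne, ?_, hl0⟩
      rw [hy']
      simp only [List.take_zero, List.nil_append]
      rw [← h2]
      exact List.getLast_mem hdropne
    · obtain ⟨h0, t0, hyy0⟩ := List.exists_cons_of_ne_nil hyne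
      have hhead : yy.head hyne = h0 := by subst hyy0; rfl
      refine ⟨h0, ?_, hhead ▸ hh0⟩
      have : h0 ∈ yy.take i := by
        rw [hyy0, show i = (i - 1) + 1 by omega, List.take_succ_cons]
        exact List.mem_cons_self
      exact List.mem_append.mpr (Or.inl this)
  · intro x hx
    rcases List.mem_append.mp hx with h | h
    · exact hI.2.1 x (List.take_subset _ _ h)
    · exact hI.2.1 x (List.drop_subset _ _ h)


lemma pump (hDne : D.Nonempty) (hD : ∀ p ∈ D, IsPattern p) {m M : ℕ}
    (hmub : ∀ p ∈ D, p.length ≤ m)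
    (hM : M = ∑ p ∈ D, p.length)
    (hnz : ∀ p ∈ Pset D, ∃ x ∈ p, x ≠ 0) :
    ∀ y, Inv D y → ∃ y', Inv D y' ∧ y'.length ≤ 2 * M + 1 := by
  suffices H : ∀ N, ∀ y, y.length ≤ N → Inv D y → ∃ y', Inv D y' ∧ y'.length ≤ 2 * M + 1 by
    exact fun y hy => H y.length y le_rfl hy
  intro N
  induction N with
  | zero => exact fun y hy hI => ⟨y, hI, by omega⟩
  | succ N ih =>
    intro y hlen hI
    by_cases hsmall : y.length ≤ 2 * M + 1
    · exact ⟨y, hI, hsmall⟩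
    push_neg at hsmall
    have hyne : y ≠ [] := by
      intro h
      rw [h] at hsmall
      simp at hsmall
    obtain ⟨hynz, hyrange, hyclean⟩ := hI
    -- trim a leading zero if present
    obtain ⟨h0, y₂, rfl⟩ := List.exists_cons_of_ne_nil hyne
    by_cases hh0 : h0 = 0
    · subst hh0
      refine ih y₂ (by simp at hlen; omega) ⟨?_, ?_, ?_⟩
      · obtain ⟨x, hx, hxne⟩ := hynz
        rcases List.mem_cons.mp hx with rfl | hx2
        · exact absurd rfl hxne
        · exact ⟨x, hx2, hxne⟩
      · exact fun x hx => hyrange x (List.mem_cons_of_mem _ hx)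
      · intro a b
        have h1 : Zpad a y₂ b <:+ Zpad (a + 1) y₂ b := by
          refine ⟨[0], ?_⟩
          unfold Zpad zeros
          rw [show a + 1 = 1 + a by omega, List.replicate_add]
          simp
        have h2 : Zpad (a + 1) y₂ b = Zpad a ((0 : ℤ) :: y₂) b := by
          unfold Zpad zeros
          rw [show a + 1 = a + 1 from rfl, List.replicate_add]
          simp
        exact clean_mono (h2 ▸ h1.isInfix) (hyclean a b)
    -- trim a trailing zero if present
    by_cases hl0 : (h0 :: y₂).getLast (by simp) = 0
    · set yy := h0 :: y₂ with hyy
      have hyne' : yy ≠ [] := by simp [hyy]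
      have hsplit : yy.dropLast ++ [(0 : ℤ)] = yy := by
        rw [← hl0]
        exact List.dropLast_append_getLast hyne'
      refine ih yy.dropLast (by have := congrArg List.length hsplit; simp at this ⊢; omega)
        ⟨?_, ?_, ?_⟩
      · obtain ⟨x, hx, hxne⟩ := hynz
        rw [← hsplit] at hx
        rcases List.mem_append.mp hx with hx2 | hx2
        · exact ⟨x, hx2, hxne⟩
        · simp at hx2
          exact absurd hx2 hxne
      · intro x hx
        exact hyrange x (List.dropLast_sublist yy |>.subset hx)
      · intro a b
        have h1 : Zpad a yy.dropLast b <+: Zpad a yy.dropLast (b + 1) := by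
          refine ⟨[0], ?_⟩
          unfold Zpad zeros
          rw [show b + 1 = b + 1 from rfl, List.replicate_add]
          simp
        have h2 : Zpad a yy.dropLast (b + 1) = Zpad a yy b := by
          unfold Zpad zeros
          rw [show b + 1 = 1 + b by omega, List.replicate_add]
          rw [← hsplit]
          simp
        exact clean_mono (h2 ▸ h1.isInfix) (hyclean a b)
    -- main case : cut using the automaton
    · set yy := h0 :: y₂ with hyy
      have hklen : 2 * M + 2 ≤ yy.length := hsmall
      have hcard : (Pref D).card < (Finset.range (2 * M + 2)).card := by
        rw [Finset.card_range]
        have := card_Pref_le (D := D) hM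
        omega
      obtain ⟨i, hi, i', hi', hne, heq⟩ :=
        Finset.exists_ne_map_eq_of_card_lt_of_maps_to hcard
          (fun i _ => st_spec hDne (zeros m ++ yy.take i) |>.1)
      simp only [Finset.mem_range] at hi hi'
      -- wlog i < i'
      rcases lt_or_gt_of_ne hne with hlt | hlt
      · exact pump_cut hDne hD hmub hnz ih (by simp) (by simpa [hyy] using hh0)
          (by simpa using hl0) ⟨hynz, hyrange, hyclean⟩ (by simpa using hlen) hklen hlt hi' heq
      · exact pump_cut hDne hD hmub hnz ih (by simp) (by simpa [hyy] using hh0)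
          (by simpa using hl0) ⟨hynz, hyrange, hyclean⟩ (by simpa using hlen) hklen hlt hi heq.symm

/-! ### diffWord lemmas -/

lemma diffWord_self (u : List Bool) : diffWord u u = zeros u.length := by
  induction u with
  | nil => rfl
  | cons a u ih =>
    simp only [diffWord] at ih
    simp [diffWord, List.replicate_succ, sub_self, ih]

lemma diffWord_append {u v u' v' : List Bool} (h : u.length = v.length) :
    diffWord (u ++ u') (v ++ v') = diffWord u v ++ diffWord u' v' :=
  List.zipWith_append h

lemma diffWord_rev (u v : List Bool) : diffWord v u = (diffWord u v).map (fun x => -x) := by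
  unfold diffWord
  rw [List.map_zipWith, List.zipWith_comm]
  simp only [neg_sub]

lemma diffWord_range : ∀ (u v : List Bool), ∀ x ∈ diffWord u v, x = -1 ∨ x = 0 ∨ x = 1
  | [], _ => by simp [diffWord]
  | _ :: _, [] => by simp [diffWord]
  | (a :: u), (b :: v) => by
      intro x hx
      simp only [diffWord, List.zipWith_cons_cons, List.mem_cons] at hx
      rcases hx with rfl | hx
      · cases a <;> cases b <;> simp [boolToInt]
      · exact diffWord_range u v x hx

lemma diffWord_faithful : ∀ {u v : List Bool}, u.length = v.length →
    (∀ x ∈ diffWord u v, x = 0) → u = v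
  | [], [], _, _ => rfl
  | [], (_ :: _), h, _ => by simp at h
  | (_ :: _), [], h, _ => by simp at h
  | (a :: u), (b :: v), hlen, hz => by
      simp only [diffWord, List.zipWith_cons_cons] at hz
      have h1 := hz _ (List.mem_cons_self)
      have hab : a = b := by
        cases a <;> cases b <;> first | rfl | (exfalso; simp [boolToInt] at h1)
      subst hab
      have := diffWord_faithful (by simpa using hlen)
        (fun x hx => hz x (List.mem_cons_of_mem _ hx))
      rw [this]

lemma zipWith_self_map {α β : Type*} (f : α → α → β) :
    ∀ l : List α, List.zipWith f l l = l.map (fun a => f a a)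
  | [] => rfl
  | a :: l => by simp [zipWith_self_map f l]

/-! ### Concatenated block codes -/

def concSel (U V : List Bool) : List Bool → List Bool
  | [] => []
  | b :: bs => (if b then U else V) ++ concSel U V bs

lemma concSel_length {U V : List Bool} {L : ℕ} (hU : U.length = L) (hV : V.length = L) :
    ∀ bs : List Bool, (concSel U V bs).length = bs.length * L
  | [] => by simp [concSel]
  | b :: bs => by
      have := concSel_length hU hV bs
      cases b <;> simp [concSel, this, hU, hV] <;> ring

lemma concSel_inj {U V : List Bool} (hlen : U.length = V.length) (hne : U ≠ V) :
    ∀ bs bs' : List Bool, bs.length = bs'.length →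
      concSel U V bs = concSel U V bs' → bs = bs'
  | [], [], _, _ => rfl
  | [], _ :: _, h, _ => by simp at h
  | _ :: _, [], h, _ => by simp at h
  | b :: bs, b' :: bs', h, hc => by
      simp only [concSel] at hc
      have hlb : (if b then U else V).length = (if b' then U else V).length := by
        cases b <;> cases b' <;> simp [hlen]
      obtain ⟨h1, h2⟩ := List.append_inj hc hlb
      have hbb : b = b' := by
        by_contra hne'
        cases b <;> cases b' <;> simp_all
      subst hbb
      have := concSel_inj hlen hne bs bs' (by simpa using h) h2
      rw [this]

lemma diff_concSel {U V : List Bool} (hlen : U.length = V.length) :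
    ∀ bs bs' : List Bool, bs.length = bs'.length →
      diffWord (concSel U V bs) (concSel U V bs') =
      ((bs.zip bs').map (fun bb =>
        diffWord (if bb.1 then U else V) (if bb.2 then U else V))).flatten
  | [], [], _ => by simp [concSel, diffWord]
  | [], _ :: _, h => by simp at h
  | _ :: _, [], h => by simp at h
  | b :: bs, b' :: bs', h => by
      have hlb : (if b then U else V).length = (if b' then U else V).length := by
        cases b <;> cases b' <;> simp [hlen]
      simp only [concSel, List.zip_cons_cons, List.map_cons, List.flatten_cons]
      rw [diffWord_append hlb, diff_concSel hlen bs bs' (by simpa using h)]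

/-! ### Avoidance for flattened block words -/

lemma flatten_avoid (hD : ∀ p ∈ D, IsPattern p) {m : ℕ} (hmub : ∀ p ∈ D, p.length ≤ m)
    (hm1 : 1 ≤ m)
    (hnz : ∀ p ∈ Pset D, ∃ x ∈ p, x ≠ 0)
    {y : List ℤ} (hclean : ∀ a b, Clean D (Zpad a y b)) (hk : 1 ≤ y.length) :
    ∀ (Bs : List (List ℤ)),
      (∀ B ∈ Bs, B = zeros (y.length + (m - 1)) ∨ B = y ++ zeros (m - 1) ∨
        B = y.map (fun x => -x) ++ zeros (m - 1)) →
      ∀ p ∈ Pset D, ¬ p <:+: Bs.flatten := by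
  have hnegclean : ∀ a b, Clean D (Zpad a (y.map (fun x => -x)) b) := by
    intro a b p hp hinf
    have h1 : p.map (fun x => -x) <:+: Zpad a y b := by
      have h2 := hinf.map (fun x : ℤ => -x)
      simpa [Zpad, zeros, map_neg_map_neg] using h2
    exact hclean a b _ (neg_mem_Pset hp) h1
  intro Bs
  induction Bs with
  | nil =>
    intro _ p hp hinf
    simp only [List.flatten_nil] at hinf
    exact Pset_ne_nil hD hp (List.eq_nil_of_infix_nil hinf)
  | cons B Bs ih =>
    intro hBs p hp hinf
    have hpne := Pset_ne_nil hD hp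
    have hplen : p.length ≤ m := Pset_length_le hmub hp
    obtain ⟨x0, hx0, hx0ne⟩ := hnz p hp
    have hBshape := hBs B (List.mem_cons_self)
    have hBlen : B.length = y.length + (m - 1) := by
      rcases hBshape with rfl | rfl | rfl <;> simp
    rw [List.flatten_cons] at hinf
    rcases infix_append_left_or hpne hinf with h1 | h1
    case inr => exact ih (fun B' hB' => hBs B' (List.mem_cons_of_mem _ hB')) p hp h1
    case inl =>
    -- find a block covering the spill-over
    have hB'0 : ∃ B'0, (B'0 = zeros (y.length + (m - 1)) ∨ B'0 = y ++ zeros (m - 1) ∨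
        B'0 = y.map (fun x => -x) ++ zeros (m - 1)) ∧
        Bs.flatten.take (p.length - 1) <+: B'0 := by
      cases Bs with
      | nil => exact ⟨zeros (y.length + (m - 1)), Or.inl rfl, by simp⟩
      | cons B' Bs' =>
        have hB'shape := hBs B' (by simp)
        have hB'len : B'.length = y.length + (m - 1) := by
          rcases hB'shape with rfl | rfl | rfl <;> simp
        refine ⟨B', hB'shape, ?_⟩
        rw [List.flatten_cons, List.take_append,
          show p.length - 1 - B'.length = 0 by omega]
        simp only [List.take_zero, List.append_nil]
        exact List.take_prefix _ _
    obtain ⟨B'0, hB'0shape, hTpre⟩ := hB'0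
    obtain ⟨r, hr⟩ := hTpre
    have hpre : B ++ Bs.flatten.take (p.length - 1) <+: B ++ B'0 :=
      ⟨r, by rw [List.append_assoc, hr]⟩
    have h2 : p <:+: B ++ B'0 := h1.trans hpre.isInfix
    rcases infix_append_right_or hpne h2 with h3 | h3
    · rcases hBshape with rfl | rfl | rfl
      · exact hx0ne (all_zero_of_infix_zeros h3 x0 hx0)
      · exact hclean 0 (m - 1) p hp (by simpa [Zpad, zeros] using h3)
      · exact hnegclean 0 (m - 1) p hp (by simpa [Zpad, zeros] using h3)
    · have hcge : y.length ≤ B.length - (p.length - 1) := by rw [hBlen]; omega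
      have hall : ∀ x ∈ B.drop (B.length - (p.length - 1)), x = (0:ℤ) := by
        intro x hx
        rcases hBshape with rfl | rfl | rfl
        · exact List.eq_of_mem_replicate (List.drop_subset _ _ hx)
        · rw [List.drop_append,
            List.drop_eq_nil_of_le (by simpa using hcge)] at hx
          exact List.eq_of_mem_replicate (List.drop_subset _ _ (by simpa using hx))
        · rw [List.drop_append,
            List.drop_eq_nil_of_le (by simpa using hcge)] at hx
          exact List.eq_of_mem_replicate (List.drop_subset _ _ (by simpa using hx))
      have hdz : B.drop (B.length - (p.length - 1)) =
          zeros ((B.drop (B.length - (p.length - 1))).length) :=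
        List.eq_replicate_iff.mpr ⟨rfl, hall⟩
      rw [hdz] at h3
      rcases hB'0shape with rfl | rfl | rfl
      · exact hx0ne (all_zero_of_infix_zeros
          (by simpa [← List.replicate_add] using h3) x0 hx0)
      · exact hclean _ (m - 1) p hp (by simpa [Zpad, zeros, List.append_assoc] using h3)
      · exact hnegclean _ (m - 1) p hp (by simpa [Zpad, zeros, List.append_assoc] using h3)

/-! ### Basic properties of `delta` -/

lemma card_code_le {n : ℕ} {C : Finset (List Bool)} (hC : ∀ u ∈ C, u.length = n) :
    C.card ≤ 2 ^ n := by
  classical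
  have hinj : Set.InjOn (fun (u : List Bool) => fun (i : Fin n) => u.getD i false) C := by
    intro u hu v hv heq
    apply List.ext_getElem (by rw [hC u hu, hC v hv])
    intro i h1 h2
    have hi : i < n := by rw [← hC u hu]; exact h1
    have h3 := congrFun heq ⟨i, hi⟩
    simp only at h3
    rwa [List.getD_eq_getElem u false h1, List.getD_eq_getElem v false h2] at h3
  have h := Finset.card_le_card_of_injOn _ (fun u _ => Finset.mem_univ _) hinj
  simpa [Finset.card_univ, Fintype.card_fun] using h

lemma Sset_bdd (D : Finset (List ℤ)) (n : ℕ) :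
    BddAbove {k : ℕ | ∃ C : Finset (List Bool),
      (∀ u ∈ C, u.length = n) ∧ AvoidsCode D C ∧ C.card = k} := by
  refine ⟨2 ^ n, ?_⟩
  rintro k ⟨C, hC, _, rfl⟩
  exact card_code_le hC

lemma zero_mem_Sset (D : Finset (List ℤ)) (n : ℕ) :
    0 ∈ {k : ℕ | ∃ C : Finset (List Bool),
      (∀ u ∈ C, u.length = n) ∧ AvoidsCode D C ∧ C.card = k} := by
  refine ⟨∅, by simp, ?_, by simp⟩
  intro u hu
  simp at hu

lemma le_delta {D : Finset (List ℤ)} {n k : ℕ}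
    (h : ∃ C : Finset (List Bool),
      (∀ u ∈ C, u.length = n) ∧ AvoidsCode D C ∧ C.card = k) : k ≤ delta D n :=
  le_csSup (Sset_bdd D n) h

lemma one_le_delta (D : Finset (List ℤ)) (n : ℕ) : 1 ≤ delta D n := by
  refine le_delta ⟨{List.replicate n false}, by simp, ?_, by simp⟩
  intro u hu v hv hne
  simp only [Finset.mem_singleton] at hu hv
  exact absurd (hu.trans hv.symm) hne

lemma delta_le_pow (D : Finset (List ℤ)) (n : ℕ) : delta D n ≤ 2 ^ n := by
  refine csSup_le ⟨0, zero_mem_Sset D n⟩ ?_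
  rintro k ⟨C, hC, _, rfl⟩
  exact card_code_le hC

lemma delta_spec (D : Finset (List ℤ)) (n : ℕ) :
    ∃ C : Finset (List Bool),
      (∀ u ∈ C, u.length = n) ∧ AvoidsCode D C ∧ C.card = delta D n :=
  Nat.sSup_mem ⟨0, zero_mem_Sset D n⟩ (Sset_bdd D n)

lemma delta_unbounded {D : Finset (List ℤ)} (hcap : 0 < cap D) :
    ∀ K : ℕ, ∃ n, K < delta D n := by
  intro K
  by_contra hcon
  push_neg at hcon
  have h0 : ∀ n : ℕ, 0 ≤ Real.logb 2 (delta D n) / n := by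
    intro n
    apply div_nonneg _ (Nat.cast_nonneg n)
    apply Real.logb_nonneg one_lt_two
    exact_mod_cast one_le_delta D n
  have hub : ∀ n : ℕ, Real.logb 2 (delta D n) / n ≤ Real.logb 2 K / n := by
    intro n
    rcases Nat.eq_zero_or_pos n with rfl | hn
    · simp
    · have hd1 : (0:ℝ) < (delta D n : ℝ) := by exact_mod_cast one_le_delta D n
      have hK1 : (0:ℝ) < (K : ℝ) := by
        have := le_trans (one_le_delta D n) (hcon n)
        exact_mod_cast this
      have hlb : Real.logb 2 (delta D n) ≤ Real.logb 2 K :=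
        (Real.logb_le_logb one_lt_two hd1 hK1).mpr (by exact_mod_cast hcon n)
      have hnpos : (0:ℝ) < (n:ℝ) := by exact_mod_cast hn
      exact (div_le_div_iff_of_pos_right hnpos).mpr hlb
  have htend : Filter.Tendsto (fun n : ℕ => Real.logb 2 (delta D n) / n)
      Filter.atTop (nhds 0) :=
    squeeze_zero h0 hub (tendsto_const_div_atTop_nhds_zero_nat _)
  have hls := htend.limsup_eq
  unfold cap at hcap
  rw [hls] at hcap
  exact lt_irrefl 0 hcap

/-! ### Extraction of a clean seed word from a large code -/

lemma seed {D : Finset (List ℤ)} (hDne : D.Nonempty) (hD : ∀ p ∈ D, IsPattern p)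
    {m : ℕ} (hmub : ∀ p ∈ D, p.length ≤ m)
    (hcap : 0 < cap D) :
    (∀ p ∈ Pset D, ∃ x ∈ p, x ≠ 0) ∧ ∃ y, Inv D y := by
  classical
  obtain ⟨n, hn⟩ := delta_unbounded hcap (9 ^ m)
  obtain ⟨C, hCl, hCa, hCc⟩ := delta_spec D n
  have hcard : (Finset.univ : Finset ((Fin m → Option Bool) × (Fin m → Option Bool))).card
      < C.card := by
    rw [hCc]
    refine lt_of_le_of_lt ?_ hn
    rw [Finset.card_univ]
    have hcardeq : Fintype.card ((Fin m → Option Bool) × (Fin m → Option Bool)) = 9 ^ m := by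
      rw [Fintype.card_prod, Fintype.card_fun, Fintype.card_fin,
        show (Fintype.card (Option Bool)) = 3 by simp, ← mul_pow]
      norm_num
    rw [hcardeq]
  obtain ⟨u, hu, v, hv, hne, hFeq⟩ :=
    Finset.exists_ne_map_eq_of_card_lt_of_maps_to (f := fun (u : List Bool) =>
        ((fun i : Fin m => u[(i : ℕ)]?), (fun i : Fin m => u.reverse[(i : ℕ)]?)))
      hcard (fun u _ => Finset.mem_univ _)
  have hFeq1 := congrArg Prod.fst hFeq
  have hFeq2 := congrArg Prod.snd hFeq
  simp only [] at hFeq1 hFeq2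
  have htake : ∀ (a b : List Bool), ((fun i : Fin m => a[(i:ℕ)]?) = fun i : Fin m => b[(i:ℕ)]?) →
      a.take m = b.take m := by
    intro a b hab
    apply List.ext_getElem?
    intro i
    rw [List.getElem?_take, List.getElem?_take]
    split
    · next hi => exact congrFun hab ⟨i, hi⟩
    · rfl
  have h1 : u.take m = v.take m := htake u v hFeq1
  have h2 : u.reverse.take m = v.reverse.take m := htake _ _ hFeq2
  have hul : u.length = n := hCl u hu
  have hvl : v.length = n := hCl v hv
  have hmn : m ≤ n := by
    by_contra hc
    push_neg at hc
    exact hne (by rw [← List.take_of_length_le (show u.length ≤ m by omega), h1,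
      List.take_of_length_le (show v.length ≤ m by omega)])
  have hdrop : u.drop (n - m) = v.drop (n - m) := by
    rw [List.take_reverse, List.take_reverse] at h2
    have h3 := congrArg List.reverse h2
    simpa [hul, hvl] using h3
  set w := diffWord u v with hw
  have hwlen : w.length = n := by simp [hw, diffWord, hul, hvl]
  have htl : (u.take m).length = (v.take m).length := by rw [h1]
  have hdec1 : w = zeros m ++ diffWord (u.drop m) (v.drop m) := by
    have hsplit : diffWord u v =
        diffWord (u.take m) (v.take m) ++ diffWord (u.drop m) (v.drop m) := by
      conv_lhs => rw [← List.take_append_drop m u, ← List.take_append_drop m v]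
      exact diffWord_append htl
    rw [hw, hsplit, h1, diffWord_self]
    congr 2
    rw [List.length_take, hvl]
    omega
  have hBlen : (diffWord (u.take (n - m)) (v.take (n - m))).length = n - m := by
    unfold diffWord
    rw [List.length_zipWith, List.length_take, List.length_take, hul, hvl]
    omega
  have hdec2 : w = diffWord (u.take (n - m)) (v.take (n - m)) ++ zeros m := by
    have hsplit : diffWord u v =
        diffWord (u.take (n - m)) (v.take (n - m)) ++
          diffWord (u.drop (n - m)) (v.drop (n - m)) := by
      conv_lhs => rw [← List.take_append_drop (n - m) u, ← List.take_append_drop (n - m) v]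
      exact diffWord_append (by rw [List.length_take, List.length_take, hul, hvl])
    rw [hw, hsplit, hdrop, diffWord_self]
    congr 2
    rw [List.length_drop, hvl]
    omega
  have hwnz : ∃ x ∈ w, x ≠ 0 := by
    by_contra hc
    push_neg at hc
    exact hne (diffWord_faithful (hul.trans hvl.symm) hc)
  have hzero_at : ∀ (i : ℕ), i < w.length → (i < m ∨ n - m ≤ i) → w[i]? = some 0 := by
    intro i hi hcase
    rcases hcase with him | him
    · rw [hdec1, List.getElem?_append_left (by simpa using him)]
      simp [zeros, List.getElem?_replicate, him]
    · rw [hdec2, List.getElem?_append_right (by rw [hBlen]; omega)]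
      rw [hBlen]
      have : i - (n - m) < m := by rw [hwlen] at hi; omega
      simp [zeros, List.getElem?_replicate, this]
  have h2m : 2 * m ≤ n := by
    by_contra hc
    push_neg at hc
    obtain ⟨x, hx, hxne⟩ := hwnz
    obtain ⟨i, hi, rfl⟩ := List.mem_iff_getElem.mp hx
    have h3 := hzero_at i hi (by rw [hwlen] at hi; omega)
    rw [List.getElem?_eq_getElem hi] at h3
    exact hxne (Option.some.inj h3)
  set A := diffWord (u.drop m) (v.drop m) with hA
  have hAw : A = w.drop m := by
    rw [hdec1]
    rw [List.drop_left' (by simp [zeros])]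
  set y := A.take (n - 2 * m) with hy
  have hAy : A = y ++ zeros m := by
    rw [hy]
    conv_lhs => rw [← List.take_append_drop (n - 2 * m) A]
    congr 1
    rw [hAw, List.drop_drop, show m + (n - 2 * m) = n - m by omega, hdec2,
      List.drop_left' hBlen]
  have hwZ : w = Zpad m y m := by
    rw [hdec1, hAy, Zpad]
    simp [List.append_assoc]
  have hcw : Clean D w := by
    intro p hp hinf
    rw [Pset, Finset.mem_union] at hp
    rcases hp with hp | hp
    · exact hCa u hu v hv hne p hp hinf
    · rw [Finset.mem_image] at hp
      obtain ⟨q, hq, rfl⟩ := hp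
      have h4 := hinf.map (fun x : ℤ => -x)
      rw [map_neg_map_neg] at h4
      rw [hw, ← diffWord_rev u v] at h4
      exact hCa v hv u hu (Ne.symm hne) q hq h4
  have hPnz : ∀ p ∈ Pset D, ∃ x ∈ p, x ≠ 0 := by
    intro p hp
    by_contra hc
    push_neg at hc
    have hpz : p = zeros p.length := List.eq_replicate_iff.mpr ⟨rfl, hc⟩
    have hplen : p.length ≤ m := Pset_length_le hmub hp
    have hppre : p <+: w := by
      rw [hwZ, hpz]
      have hzz : zeros p.length <+: zeros m :=
        ⟨zeros (m - p.length), by rw [← List.replicate_add]; congr 1; omega⟩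
      refine hzz.trans ?_
      unfold Zpad
      rw [List.append_assoc]
      exact List.prefix_append _ _
    exact hcw p hp hppre.isInfix
  refine ⟨hPnz, ⟨y, ?_, ?_, ?_⟩⟩
  · obtain ⟨x, hx, hxne⟩ := hwnz
    rw [hwZ] at hx
    unfold Zpad at hx
    rcases List.mem_append.mp hx with hx1 | hx1
    · rcases List.mem_append.mp hx1 with hx2 | hx2
      · exact absurd (List.eq_of_mem_replicate hx2) hxne
      · exact ⟨x, hx2, hxne⟩
    · exact absurd (List.eq_of_mem_replicate hx1) hxne
  · intro x hx
    refine diffWord_range (u.drop m) (v.drop m) x ?_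
    rw [← hA]
    exact List.take_subset _ _ hx
  · refine clean_pad_all hD hmub hPnz ?_
    rw [← hwZ]
    exact hcw

end PCLB

/-- if `cap(D) > 0` then `cap(D) ≥ 1/(2M + m)`, where `m` is the maximal
pattern length and `M` the sum of pattern lengths. -/
theorem positive_capacity_lower_bound (D : Finset (List ℤ)) (hDne : D.Nonempty)
    (hD : ∀ p ∈ D, IsPattern p) (m : ℕ)
    (hm : (∃ p ∈ D, p.length = m) ∧ ∀ p ∈ D, p.length ≤ m)
    (M : ℕ) (hM : M = ∑ p ∈ D, p.length)
    (hcap : 0 < cap D) :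
    1 / (2 * (M : ℝ) + m) ≤ cap D := by
  classical
  obtain ⟨hmex, hmub⟩ := hm
  obtain ⟨p0, hp0D, hp0len⟩ := hmex
  have hm1 : 1 ≤ m := by
    have h0 := (hD p0 hp0D).1
    have h1 : p0.length ≠ 0 := by simpa using h0
    omega
  obtain ⟨hPnz, y0, hy0⟩ := PCLB.seed hDne hD hmub hcap
  obtain ⟨y, hyInv, hylen⟩ := PCLB.pump hDne hD hmub hM hPnz y0 hy0
  obtain ⟨hynz, hyrange, hyclean⟩ := hyInv
  have hyne : y ≠ [] := by
    rintro rfl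
    obtain ⟨x, hx, _⟩ := hynz
    simp at hx
  have hk1 : 1 ≤ y.length := List.length_pos_iff.mpr hyne
  have hL1 : 1 ≤ y.length + (m - 1) := by omega
  have hLle : y.length + (m - 1) ≤ 2 * M + m := by omega
  -- the two block words
  have hUlen : (y.map (fun z => decide (z = 1)) ++ List.replicate (m-1) false).length
      = y.length + (m - 1) := by simp
  have hVlen : (y.map (fun z => decide (z = -1)) ++ List.replicate (m-1) false).length
      = y.length + (m - 1) := by simp
  have hdUV : diffWord (y.map (fun z => decide (z = 1)) ++ List.replicate (m-1) false)
      (y.map (fun z => decide (z = -1)) ++ List.replicate (m-1) false)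
      = y ++ PCLB.zeros (m-1) := by
    rw [PCLB.diffWord_append (by simp)]
    congr 1
    · unfold diffWord
      rw [List.zipWith_map, PCLB.zipWith_self_map]
      have : ∀ x ∈ y, (boolToInt (decide (x = 1)) - boolToInt (decide (x = -1))) = x := by
        intro x hx
        rcases hyrange x hx with rfl | rfl | rfl <;> simp [boolToInt]
      calc List.map (fun a => boolToInt (decide (a = 1)) - boolToInt (decide (a = -1))) y
          = List.map id y := List.map_congr_left (fun a ha => this a ha)
        _ = y := List.map_id y
    · simpa using PCLB.diffWord_self (List.replicate (m-1) false)
  have hdVU : diffWord (y.map (fun z => decide (z = -1)) ++ List.replicate (m-1) false)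
      (y.map (fun z => decide (z = 1)) ++ List.replicate (m-1) false)
      = y.map (fun x => -x) ++ PCLB.zeros (m-1) := by
    rw [PCLB.diffWord_rev, hdUV]
    simp [PCLB.zeros]
  have hUV : (y.map (fun z => decide (z = 1)) ++ List.replicate (m-1) false)
      ≠ (y.map (fun z => decide (z = -1)) ++ List.replicate (m-1) false) := by
    intro hEq
    have h0 : diffWord (y.map (fun z => decide (z = 1)) ++ List.replicate (m-1) false)
        (y.map (fun z => decide (z = -1)) ++ List.replicate (m-1) false)
        = PCLB.zeros (y.length + (m-1)) := by
      rw [hEq, PCLB.diffWord_self, hVlen]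
    rw [hdUV] at h0
    obtain ⟨x, hx, hxne⟩ := hynz
    exact hxne (List.eq_of_mem_replicate (h0 ▸ List.mem_append_left _ hx))
  -- code of rate 1/L
  have hdelta : ∀ t : ℕ, 2 ^ t ≤ delta D (t * (y.length + (m - 1))) := by
    intro t
    refine PCLB.le_delta ⟨Finset.image (fun g : Fin t → Bool =>
      PCLB.concSel (y.map (fun z => decide (z = 1)) ++ List.replicate (m-1) false)
        (y.map (fun z => decide (z = -1)) ++ List.replicate (m-1) false)
        (List.ofFn g)) Finset.univ, ?_, ?_, ?_⟩
    · intro u hu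
      obtain ⟨g, _, rfl⟩ := Finset.mem_image.mp hu
      rw [PCLB.concSel_length hUlen hVlen, List.length_ofFn]
    · intro u hu v hv hne p hp hinf
      obtain ⟨g, _, rfl⟩ := Finset.mem_image.mp hu
      obtain ⟨g', _, rfl⟩ := Finset.mem_image.mp hv
      rw [PCLB.diff_concSel (hUlen.trans hVlen.symm) _ _ (by simp)] at hinf
      refine PCLB.flatten_avoid hD hmub hm1 hPnz hyclean hk1 _ ?_ p
        (Finset.mem_union_left _ hp) hinf
      intro B hB
      simp only [List.mem_map] at hB
      obtain ⟨bb, _, rfl⟩ := hB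
      rcases bb with ⟨_|_, _|_⟩
      · exact Or.inl (by simp only [Bool.false_eq_true, if_false, PCLB.diffWord_self, hVlen])
      · exact Or.inr (Or.inr (by simpa using hdVU))
      · exact Or.inr (Or.inl (by simpa using hdUV))
      · exact Or.inl (by simp only [if_true, PCLB.diffWord_self, hUlen])
    · rw [Finset.card_image_of_injOn, Finset.card_univ, Fintype.card_fun]
      · simp
      · intro g _ g' _ hgg
        exact List.ofFn_inj.mp
          (PCLB.concSel_inj (hUlen.trans hVlen.symm) hUV _ _ (by simp) hgg)
  -- from codes to the capacity
  have hfreq : ∃ᶠ nn in Filter.atTop,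
      (1 / ((y.length + (m - 1) : ℕ) : ℝ)) ≤ Real.logb 2 (delta D nn) / nn := by
    rw [Filter.frequently_atTop]
    intro N
    refine ⟨(N + 1) * (y.length + (m - 1)), ?_, ?_⟩
    · have := Nat.le_mul_of_pos_right (N + 1) (show 0 < y.length + (m-1) by omega)
      omega
    · have hdel := hdelta (N + 1)
      have hdpos : (1:ℝ) ≤ (delta D ((N+1) * (y.length + (m-1))) : ℝ) := by
        exact_mod_cast PCLB.one_le_delta D _
      have h2t : ((2:ℝ)) ^ (N+1) ≤ (delta D ((N+1) * (y.length + (m-1))) : ℝ) := by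
        exact_mod_cast hdel
      have hlogb : ((N+1 : ℕ) : ℝ) ≤ Real.logb 2 (delta D ((N+1) * (y.length + (m-1)))) := by
        have h3 := (Real.logb_le_logb one_lt_two (by positivity) (by linarith)).mpr h2t
        rwa [Real.logb_pow, Real.logb_self_eq_one one_lt_two, mul_one] at h3
      have htpos : (0:ℝ) < ((N+1 : ℕ) : ℝ) := by positivity
      have hLpos : (0:ℝ) < ((y.length + (m-1) : ℕ) : ℝ) := by
        exact_mod_cast hL1
      calc (1 / ((y.length + (m - 1) : ℕ) : ℝ))
          = ((N+1 : ℕ) : ℝ) / (((N+1 : ℕ) : ℝ) * ((y.length + (m-1) : ℕ) : ℝ)) := by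
            rw [← div_div, div_self (ne_of_gt htpos)]
        _ ≤ Real.logb 2 (delta D ((N+1) * (y.length + (m-1)))) /
              (((N+1) * (y.length + (m-1)) : ℕ) : ℝ) := by
            push_cast
            gcongr
            exact_mod_cast hlogb
  have hbdd : Filter.IsBoundedUnder (· ≤ ·) Filter.atTop
      (fun nn : ℕ => Real.logb 2 (delta D nn) / nn) := by
    refine Filter.isBoundedUnder_of ⟨1, fun nn => ?_⟩
    rcases Nat.eq_zero_or_pos nn with rfl | hnn
    · simp
    · have hdpos : (1:ℝ) ≤ (delta D nn : ℝ) := by exact_mod_cast PCLB.one_le_delta D nn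
      have hle : (delta D nn : ℝ) ≤ (2:ℝ) ^ nn := by exact_mod_cast PCLB.delta_le_pow D nn
      have h1 : Real.logb 2 (delta D nn) ≤ nn := by
        have h2 := (Real.logb_le_logb one_lt_two (by linarith) (by positivity)).mpr hle
        rwa [Real.logb_pow, Real.logb_self_eq_one one_lt_two, mul_one] at h2
      have hnn' : (0:ℝ) < nn := by exact_mod_cast hnn
      rw [div_le_one hnn']
      exact h1
  have hcapge : 1 / ((y.length + (m - 1) : ℕ) : ℝ) ≤ cap D :=
    Filter.le_limsup_of_frequently_le hfreq hbdd
  refine le_trans ?_ hcapge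
  have hLpos : (0:ℝ) < ((y.length + (m - 1) : ℕ) : ℝ) := by exact_mod_cast hL1
  apply one_div_le_one_div_of_le hLpos
  have : ((y.length + (m - 1) : ℕ) : ℝ) ≤ ((2 * M + m : ℕ) : ℝ) := by exact_mod_cast hLle
  calc ((y.length + (m - 1) : ℕ) : ℝ) ≤ ((2 * M + m : ℕ) : ℝ) := this
    _ = 2 * (M : ℝ) + m := by push_cast; ring
end

section
/- Let d ≥ 1, let S be a finite nonempty set of linear endomorphisms of ℝ^d, and let ρ > 0. Suppose there exists a constant c such that for every n ≥ 0 and every finite product A₁⋯Aₙ of operators Aᵢ ∈ S, the operator norm of A₁⋯Aₙ is at most c·ρⁿ. Then there exists a norm N on ℝ^d (equivalent to the Euclidean norm) such that N(A x) ≤ ρ · N(x) for every A ∈ S and every x ∈ ℝ^d; that is, S possesses an extremal norm at level ρ. -/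
/-- if all products of operators from a finite nonempty set `S` of linear
endomorphisms of `ℝ^d` satisfy `‖A₁⋯Aₙ‖ ≤ c·ρⁿ`, then `S` possesses an extremal norm at
level `ρ`: a norm `N` on `ℝ^d`, equivalent to the Euclidean norm, with `N(Ax) ≤ ρ·N(x)`
for all `A ∈ S` and all `x`. -/
theorem exists_extremal_norm (d : ℕ) (hd : 1 ≤ d)
    (S : Finset (EuclideanSpace ℝ (Fin d) →L[ℝ] EuclideanSpace ℝ (Fin d)))
    (hS : S.Nonempty) (ρ : ℝ) (hρ : 0 < ρ)
    (hbound : ∃ c : ℝ, ∀ L : List (EuclideanSpace ℝ (Fin d) →L[ℝ] EuclideanSpace ℝ (Fin d)),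
      (∀ A ∈ L, A ∈ S) → ‖L.prod‖ ≤ c * ρ ^ L.length) :
    ∃ N : Seminorm ℝ (EuclideanSpace ℝ (Fin d)),
      (∃ c₁ c₂ : ℝ, 0 < c₁ ∧ 0 < c₂ ∧ ∀ x, c₁ * ‖x‖ ≤ N x ∧ N x ≤ c₂ * ‖x‖) ∧
      ∀ A ∈ S, ∀ x, N (A x) ≤ ρ * N x := by
  classical
  obtain ⟨c, hc⟩ := hbound
  set E := EuclideanSpace ℝ (Fin d)
  set ι := {L : List (E →L[ℝ] E) // ∀ A ∈ L, A ∈ S} with hι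
  -- the seminorm family
  have hk : ∀ (n : ℕ), (0:ℝ) ≤ (ρ ^ n)⁻¹ := fun n => by positivity
  set p : ι → Seminorm ℝ E := fun L =>
    ((ρ ^ L.1.length)⁻¹).toNNReal • (normSeminorm ℝ E).comp L.1.prod.toLinearMap with hp
  have hpapp : ∀ (L : ι) (x : E), p L x = (ρ ^ L.1.length)⁻¹ * ‖L.1.prod x‖ := by
    intro L x
    simp [hp, Seminorm.smul_apply, NNReal.smul_def, Real.coe_toNNReal _ (hk _)]
  set c' : ℝ := max c 1 with hc'
  have hc'1 : (1:ℝ) ≤ c' := le_max_right _ _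
  have hbdd : ∀ (L : ι) (x : E), p L x ≤ c' * ‖x‖ := by
    intro L x
    rw [hpapp]
    have h1 : ‖L.1.prod x‖ ≤ (c * ρ ^ L.1.length) * ‖x‖ :=
      le_trans (L.1.prod.le_opNorm x) (by
        exact mul_le_mul_of_nonneg_right (hc L.1 L.2) (norm_nonneg x))
    calc (ρ ^ L.1.length)⁻¹ * ‖L.1.prod x‖
        ≤ (ρ ^ L.1.length)⁻¹ * ((c * ρ ^ L.1.length) * ‖x‖) :=
          mul_le_mul_of_nonneg_left h1 (hk _)
      _ = c * ‖x‖ := by field_simp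
      _ ≤ c' * ‖x‖ := mul_le_mul_of_nonneg_right (le_max_left _ _) (norm_nonneg x)
  have hbddS : BddAbove (Set.range p) := by
    refine ⟨c'.toNNReal • normSeminorm ℝ E, ?_⟩
    rintro q ⟨L, rfl⟩
    intro x
    have := hbdd L x
    simpa [Seminorm.smul_apply, NNReal.smul_def, Real.coe_toNNReal _ (le_trans zero_le_one hc'1)]
      using this
  set N : Seminorm ℝ E := ⨆ L, p L with hN
  have hNcoe : ∀ x, N x = ⨆ L, p L x := by
    intro x
    rw [hN, Seminorm.iSup_apply hbddS]
  have hbddx : ∀ x : E, BddAbove (Set.range fun L => p L x) := by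
    intro x
    exact ⟨c' * ‖x‖, by rintro r ⟨L, rfl⟩; exact hbdd L x⟩
  have hne : Nonempty ι := ⟨⟨[], by simp⟩⟩
  refine ⟨N, ⟨1, c', one_pos, lt_of_lt_of_le one_pos hc'1, fun x => ?_⟩, ?_⟩
  · constructor
    · rw [one_mul, hNcoe]
      have h0 : p ⟨[], by simp⟩ x = ‖x‖ := by rw [hpapp]; simp
      calc ‖x‖ = p ⟨[], by simp⟩ x := h0.symm
        _ ≤ ⨆ L, p L x := le_ciSup (hbddx x) _
    · rw [hNcoe]
      exact ciSup_le fun L => hbdd L x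
  · intro A hA x
    rw [hNcoe, hNcoe]
    refine ciSup_le fun L => ?_
    have hLA : ∀ B ∈ L.1 ++ [A], B ∈ S := by
      intro B hB
      rcases List.mem_append.1 hB with h | h
      · exact L.2 B h
      · simp at h; subst h; exact hA
    have key : p L (A x) = ρ * p ⟨L.1 ++ [A], hLA⟩ x := by
      rw [hpapp L, hpapp ⟨L.1 ++ [A], hLA⟩]
      have h2 : ((⟨L.1 ++ [A], hLA⟩ : ι) : List (E →L[ℝ] E)).prod x = L.1.prod (A x) := by
        show (L.1 ++ [A]).prod x = L.1.prod (A x)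
        rw [List.prod_append]; simp [ContinuousLinearMap.mul_apply]
      have h3 : ((⟨L.1 ++ [A], hLA⟩ : ι) : List (E →L[ℝ] E)).length = L.1.length + 1 := by
        show (L.1 ++ [A]).length = L.1.length + 1
        simp
      rw [h2, h3, pow_succ, mul_inv, ← mul_assoc, ← mul_assoc]
      congr 1
      field_simp
    rw [key]
    exact mul_le_mul_of_nonneg_left (le_ciSup (hbddx x) _) (le_of_lt hρ)
end

section
/- Let D = {(0, +1, +1)} be the singleton set consisting of the pattern 0++. Then cap(D) = log₂((√5 + 1)/2), the base-2 logarithm of the golden ratio. -/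
/-! ### Auxiliary material -/

section Aux

open Finset

/-- The fixed forbidden set `{0++}`. -/
def Dzpp : Finset (List ℤ) := {[(0:ℤ), 1, 1]}

lemma diff_cons_same (b : Bool) (x y : List Bool) :
    diffWord (b :: x) (b :: y) = 0 :: diffWord x y := by
  simp [diffWord, boolToInt]

lemma diff_cons (a b : Bool) (x y : List Bool) :
    diffWord (a :: x) (b :: y) = (boolToInt a - boolToInt b) :: diffWord x y := rfl

/-- A word has no two adjacent `true`s. -/
def NoTT (u : List Bool) : Prop :=
  ∀ k : ℕ, ¬(u[k]? = some true ∧ u[k+1]? = some true)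

lemma noTT_nil : NoTT [] := by intro k h; simp at h

lemma noTT_single (a : Bool) : NoTT [a] := by
  intro k h
  rcases h with ⟨h1, h2⟩
  rcases k with _ | j
  · simp at h2
  · simp at h1

lemma noTT_cons_false {w : List Bool} (h : NoTT w) : NoTT (false :: w) := by
  intro k hk
  rcases k with _ | j
  · simp at hk
  · rw [List.getElem?_cons_succ, List.getElem?_cons_succ] at hk
    exact h j hk

lemma noTT_cons_true_false {w : List Bool} (h : NoTT w) : NoTT (true :: false :: w) := by
  intro k hk
  rcases k with _ | _ | j
  · rcases hk with ⟨_, h2⟩; simp at h2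
  · rcases hk with ⟨h1, _⟩
    rw [List.getElem?_cons_succ] at h1
    simp at h1
  · rcases hk with ⟨h1, h2⟩
    rw [List.getElem?_cons_succ, List.getElem?_cons_succ] at h1 h2
    exact h j ⟨h1, h2⟩

/-- The Fibonacci family of codes: words of length `n` with no two adjacent ones. -/
def goodF : ℕ → Finset (List Bool)
  | 0 => {[]}
  | 1 => {[false], [true]}
  | (n+2) => ((goodF (n+1)).image (List.cons false)) ∪
      ((goodF n).image (fun l => true :: false :: l))

lemma goodF_length : ∀ n, ∀ u ∈ goodF n, u.length = n
  | 0, u, hu => by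
    rw [goodF, Finset.mem_singleton] at hu; subst hu; rfl
  | 1, u, hu => by
    rw [goodF] at hu
    simp only [Finset.mem_insert, Finset.mem_singleton] at hu
    rcases hu with rfl | rfl <;> rfl
  | (n+2), u, hu => by
    rw [goodF, Finset.mem_union] at hu
    rcases hu with hu | hu
    · rcases Finset.mem_image.mp hu with ⟨w, hw, rfl⟩
      simp [goodF_length (n+1) w hw]
    · rcases Finset.mem_image.mp hu with ⟨w, hw, rfl⟩
      simp [goodF_length n w hw]

lemma goodF_noTT : ∀ n, ∀ u ∈ goodF n, NoTT u
  | 0, u, hu => by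
    rw [goodF, Finset.mem_singleton] at hu; subst hu; exact noTT_nil
  | 1, u, hu => by
    rw [goodF] at hu
    simp only [Finset.mem_insert, Finset.mem_singleton] at hu
    rcases hu with rfl | rfl <;> exact noTT_single _
  | (n+2), u, hu => by
    rw [goodF, Finset.mem_union] at hu
    rcases hu with hu | hu
    · rcases Finset.mem_image.mp hu with ⟨w, hw, rfl⟩
      exact noTT_cons_false (goodF_noTT (n+1) w hw)
    · rcases Finset.mem_image.mp hu with ⟨w, hw, rfl⟩
      exact noTT_cons_true_false (goodF_noTT n w hw)

lemma goodF_card : ∀ n, (goodF n).card = Nat.fib (n+2)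
  | 0 => by rw [goodF]; decide
  | 1 => by rw [goodF]; decide
  | (n+2) => by
    rw [goodF]
    have hdisj : Disjoint ((goodF (n+1)).image (List.cons false))
        ((goodF n).image (fun l => true :: false :: l)) := by
      rw [Finset.disjoint_left]
      rintro a ha hb
      rcases Finset.mem_image.mp ha with ⟨w, _, rfl⟩
      rcases Finset.mem_image.mp hb with ⟨w', _, h⟩
      simp at h
    rw [Finset.card_union_of_disjoint hdisj,
      Finset.card_image_of_injective _ List.cons_injective,
      Finset.card_image_of_injective _ (fun x y h => by simpa using h),
      goodF_card (n+1), goodF_card n]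
    have h3 : Nat.fib (n+2+2) = Nat.fib (n+2) + Nat.fib (n+2+1) := Nat.fib_add_two
    rw [show n+2+1 = n+1+2 from by omega] at h3
    omega

lemma diff_one {u v : List Bool} {i : ℕ} (h : (diffWord u v)[i]? = some 1) :
    u[i]? = some true := by
  unfold diffWord at h
  rw [List.getElem?_zipWith] at h
  cases hu : u[i]? with
  | none => rw [hu] at h; simp at h
  | some a =>
    cases hv : v[i]? with
    | none => rw [hu, hv] at h; simp at h
    | some b =>
      rw [hu, hv] at h
      simp only [Option.some.injEq] at h
      cases a <;> cases b <;> simp [boolToInt] at h ⊢ <;> omega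

lemma infix_idx {d : List ℤ} (h : [(0:ℤ), 1, 1] <:+: d) :
    ∃ k, d[k+1]? = some 1 ∧ d[k+2]? = some 1 := by
  rcases h with ⟨s, t, hst⟩
  refine ⟨s.length, ?_, ?_⟩ <;> rw [← hst, List.append_assoc]
  · rw [List.getElem?_append_right (by omega)]
    have : s.length + 1 - s.length = 1 := by omega
    rw [this]; simp
  · rw [List.getElem?_append_right (by omega)]
    have : s.length + 2 - s.length = 2 := by omega
    rw [this]; simp

lemma goodF_avoids (n : ℕ) : AvoidsCode Dzpp (goodF n) := by
  intro u hu v hv huv p hp hinf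
  rw [Dzpp, Finset.mem_singleton] at hp
  subst hp
  rcases infix_idx hinf with ⟨k, h1, h2⟩
  exact goodF_noTT n u hu (k+1) ⟨diff_one h1, diff_one h2⟩

/-! ### Upper bound -/

/-- A strengthened code condition: avoids `0++` and moreover no difference of distinct
codewords starts with `++`. -/
def BC (C : Finset (List Bool)) : Prop :=
  AvoidsCode Dzpp C ∧ ∀ u ∈ C, ∀ v ∈ C, u ≠ v → ¬ ([(1:ℤ), 1] <+: diffWord u v)

lemma avoids_subset {C C' : Finset (List Bool)} (h : AvoidsCode Dzpp C) (hs : C' ⊆ C) :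
    AvoidsCode Dzpp C' := fun u hu v hv hne p hp => h u (hs hu) v (hs hv) hne p hp

lemma mem_Dzpp : [(0:ℤ), 1, 1] ∈ Dzpp := Finset.mem_singleton_self _

/-- Stripping a common first letter from a code turns an avoiding code into a `BC` code. -/
lemma tail_step {C : Finset (List Bool)} (b : Bool)
    (hA : AvoidsCode Dzpp C) (hb : ∀ u ∈ C, ∃ x, u = b :: x) :
    BC (C.image List.tail) ∧ (C.image List.tail).card = C.card ∧
      (∀ w ∈ C.image List.tail, b :: w ∈ C) := by
  have hmem : ∀ w ∈ C.image List.tail, b :: w ∈ C := by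
    intro w hw
    rcases Finset.mem_image.mp hw with ⟨u, hu, rfl⟩
    rcases hb u hu with ⟨x, rfl⟩
    simpa using hu
  have hcard : (C.image List.tail).card = C.card := by
    apply Finset.card_image_of_injOn
    intro u hu v hv h
    rcases hb u hu with ⟨x, rfl⟩
    rcases hb v hv with ⟨y, rfl⟩
    simp only [List.tail_cons] at h
    rw [h]
  refine ⟨⟨?_, ?_⟩, hcard, hmem⟩
  · -- AvoidsCode of tails
    intro w hw w' hw' hne p hp hinf
    have hu : b :: w ∈ C := hmem w hw
    have hv : b :: w' ∈ C := hmem w' hw'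
    have hne' : (b :: w) ≠ (b :: w') := by
      intro h; apply hne; simpa using h
    apply hA _ hu _ hv hne' p hp
    rw [diff_cons_same]
    exact List.infix_cons hinf
  · -- no `++` prefix in differences of tails
    intro w hw w' hw' hne hpre
    have hu : b :: w ∈ C := hmem w hw
    have hv : b :: w' ∈ C := hmem w' hw'
    have hne' : (b :: w) ≠ (b :: w') := by
      intro h; apply hne; simpa using h
    rcases hpre with ⟨t, ht⟩
    apply hA _ hu _ hv hne' _ mem_Dzpp
    apply List.IsPrefix.isInfix
    exact ⟨t, by rw [diff_cons_same, ← ht]; rfl⟩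

lemma card_le_two {C : Finset (List Bool)} (h : ∀ u ∈ C, u.length = 1) : C.card ≤ 2 := by
  have hsub : C ⊆ {[false], [true]} := by
    intro u hu
    have := h u hu
    match u, this with
    | [a], _ => cases a <;> simp
  calc C.card ≤ ({[false], [true]} : Finset (List Bool)).card := Finset.card_le_card hsub
    _ = 2 := by decide

lemma card_le_one {C : Finset (List Bool)} (h : ∀ u ∈ C, u.length = 0) : C.card ≤ 1 := by
  have hsub : C ⊆ {[]} := by
    intro u hu
    have := h u hu
    rw [List.length_eq_zero_iff] at this
    simp [this]
  calc C.card ≤ ({[]} : Finset (List Bool)).card := Finset.card_le_card hsub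
    _ = 1 := rfl

/-- Main counting lemma: a `BC` code of length-`n` words has at most `fib (n+2)` words. -/
lemma B_bound : ∀ n : ℕ, ∀ C : Finset (List Bool),
    (∀ u ∈ C, u.length = n) → BC C → C.card ≤ Nat.fib (n+2) := by
  intro n
  induction n using Nat.strong_induction_on with
  | _ n ih =>
    rcases n with _ | _ | m
    · intro C hlen _
      calc C.card ≤ 1 := card_le_one hlen
        _ ≤ Nat.fib 2 := by decide
    · intro C hlen _
      calc C.card ≤ 2 := card_le_two hlen
        _ ≤ Nat.fib 3 := by decide
    · intro C hlen hBC
      -- there is a bit `b` such that no codeword starts with `b :: b`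
      have hbb : ∃ b : Bool, ∀ u ∈ C, ¬ ∃ z, u = b :: b :: z := by
        by_contra hcon
        push_neg at hcon
        rcases hcon true with ⟨u, hu, z1, rfl⟩
        rcases hcon false with ⟨v, hv, z0, rfl⟩
        have hne : (true :: true :: z1) ≠ (false :: false :: z0) := by simp
        apply hBC.2 _ hu _ hv hne
        exact ⟨diffWord z1 z0, by simp [diffWord, boolToInt]⟩
      rcases hbb with ⟨b, hbnot⟩
      classical
      set Cb := C.filter (fun u => u.head? = some b) with hCbdef
      set Cn := C.filter (fun u => ¬ (u.head? = some b)) with hCndef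
      have hsplit : Cb.card + Cn.card = C.card :=
        Finset.card_filter_add_card_filter_not _
      -- every word in `Cn` starts with `!b`
      have hCn_shape : ∀ u ∈ Cn, ∃ x, u = (!b) :: x := by
        intro u hu
        rw [hCndef, Finset.mem_filter] at hu
        rcases hu with ⟨huC, hhd⟩
        have hl := hlen u huC
        match u, hl with
        | c :: x, _ =>
          refine ⟨x, ?_⟩
          have : c ≠ b := by intro h; exact hhd (by simp [h])
          have : c = !b := by cases c <;> cases b <;> simp_all
          rw [this]
      -- every word in `Cb` starts with `b :: !b`
      have hCb_shape : ∀ u ∈ Cb, ∃ x, u = b :: (!b) :: x := by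
        intro u hu
        rw [hCbdef, Finset.mem_filter] at hu
        rcases hu with ⟨huC, hhd⟩
        have hl := hlen u huC
        match u, hl with
        | c :: x, hl =>
          have hc : c = b := by simpa using hhd
          subst hc
          match x, hl with
          | d :: z, _ =>
            refine ⟨z, ?_⟩
            have hd : d ≠ c := by
              intro h; exact hbnot _ huC ⟨z, by rw [h]⟩
            have : d = !c := by cases d <;> cases c <;> simp_all
            rw [this]
      -- bound `Cn`
      have hCn_bound : Cn.card ≤ Nat.fib (m + 1 + 2) := by
        have hsub : Cn ⊆ C := Finset.filter_subset _ _
        obtain ⟨hBC', hcard', hmem'⟩ :=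
          tail_step (!b) (avoids_subset hBC.1 hsub) hCn_shape
        have hlen' : ∀ w ∈ Cn.image List.tail, w.length = m + 1 := by
          intro w hw
          have := hlen _ (hsub (hmem' w hw))
          simpa using this
        have := ih (m+1) (by omega) _ hlen' hBC'
        omega
      -- bound `Cb`
      have hCb_bound : Cb.card ≤ Nat.fib (m + 2) := by
        have hsub : Cb ⊆ C := Finset.filter_subset _ _
        have hCb_shape1 : ∀ u ∈ Cb, ∃ x, u = b :: x := by
          intro u hu; rcases hCb_shape u hu with ⟨x, rfl⟩; exact ⟨_, rfl⟩
        obtain ⟨hBC1, hcard1, hmem1⟩ :=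
          tail_step b (avoids_subset hBC.1 hsub) hCb_shape1
        set C1 := Cb.image List.tail with hC1def
        have hC1_shape : ∀ w ∈ C1, ∃ x, w = (!b) :: x := by
          intro w hw
          rcases Finset.mem_image.mp hw with ⟨u, hu, rfl⟩
          rcases hCb_shape u hu with ⟨x, rfl⟩
          exact ⟨x, rfl⟩
        obtain ⟨hBC2, hcard2, hmem2⟩ := tail_step (!b) hBC1.1 hC1_shape
        have hlen2 : ∀ w ∈ C1.image List.tail, w.length = m := by
          intro w hw
          have h1 : (!b) :: w ∈ C1 := hmem2 w hw
          have h2 : b :: (!b) :: w ∈ Cb := hmem1 _ h1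
          have := hlen _ (hsub h2)
          simpa using this
        have := ih m (by omega) _ hlen2 hBC2
        omega
      rw [show m+1+1+2 = m+2+2 from by omega]
      have hfib : Nat.fib (m+2+2) = Nat.fib (m+2) + Nat.fib (m+1+2) := by
        rw [Nat.fib_add_two (n := m + 2), show m+2+1 = m+1+2 from by omega]
      omega

/-- Any code of length-`n` words avoiding `{0++}` has at most `fib (n+3)` words. -/
lemma A_bound (n : ℕ) (C : Finset (List Bool))
    (hlen : ∀ u ∈ C, u.length = n) (hA : AvoidsCode Dzpp C) :
    C.card ≤ Nat.fib (n+3) := by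
  rcases n with _ | m
  · calc C.card ≤ 1 := card_le_one hlen
      _ ≤ Nat.fib 3 := by decide
  · classical
    set Ct := C.filter (fun u => u.head? = some true) with hCtdef
    set Cf := C.filter (fun u => ¬ (u.head? = some true)) with hCfdef
    have hsplit : Ct.card + Cf.card = C.card :=
      Finset.card_filter_add_card_filter_not _
    have bound : ∀ (b : Bool) (C' : Finset (List Bool)), C' ⊆ C →
        (∀ u ∈ C', ∃ x, u = b :: x) → C'.card ≤ Nat.fib (m + 2) := by
      intro b C' hsub hshape
      obtain ⟨hBC', hcard', hmem'⟩ := tail_step b (avoids_subset hA hsub) hshape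
      have hlen' : ∀ w ∈ C'.image List.tail, w.length = m := by
        intro w hw
        have := hlen _ (hsub (hmem' w hw))
        simpa using this
      have := B_bound m _ hlen' hBC'
      omega
    have hCt : Ct.card ≤ Nat.fib (m + 2) := by
      apply bound true Ct (Finset.filter_subset _ _)
      intro u hu
      rw [hCtdef, Finset.mem_filter] at hu
      rcases hu with ⟨huC, hhd⟩
      have hl := hlen u huC
      match u, hl with
      | c :: x, _ =>
        have : c = true := by simpa using hhd
        exact ⟨x, by rw [this]⟩
    have hCf : Cf.card ≤ Nat.fib (m + 2) := by
      apply bound false Cf (Finset.filter_subset _ _)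
      intro u hu
      rw [hCfdef, Finset.mem_filter] at hu
      rcases hu with ⟨huC, hhd⟩
      have hl := hlen u huC
      match u, hl with
      | c :: x, _ =>
        have : c = false := by cases c <;> simp_all
        exact ⟨x, by rw [this]⟩
    have h1 : Nat.fib (m + 2) ≤ Nat.fib (m + 2 + 1) := Nat.fib_mono (by omega)
    have hfib : Nat.fib (m + 1 + 3) = Nat.fib (m + 2) + Nat.fib (m + 2 + 1) := by
      rw [show m+1+3 = m+2+2 from by omega]
      exact Nat.fib_add_two
    omega

/-! ### Bounds on `delta` -/

lemma delta_set_bddAbove (n : ℕ) :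
    BddAbove {k : ℕ | ∃ C : Finset (List Bool),
      (∀ u ∈ C, u.length = n) ∧ AvoidsCode Dzpp C ∧ C.card = k} := by
  refine ⟨Nat.fib (n+3), ?_⟩
  rintro k ⟨C, hlen, hA, rfl⟩
  exact A_bound n C hlen hA

lemma delta_lb (n : ℕ) : Nat.fib (n+2) ≤ delta Dzpp n := by
  apply le_csSup (delta_set_bddAbove n)
  exact ⟨goodF n, goodF_length n, goodF_avoids n, goodF_card n⟩

lemma delta_ub (n : ℕ) : delta Dzpp n ≤ Nat.fib (n+3) := by
  apply csSup_le
  · exact ⟨0, ∅, by simp, fun u hu => absurd hu (Finset.notMem_empty u), Finset.card_empty⟩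
  · rintro k ⟨C, hlen, hA, rfl⟩
    exact A_bound n C hlen hA

/-! ### Fibonacci vs golden ratio -/

open Real

lemma pow_le_fib : ∀ n : ℕ, goldenRatio ^ n ≤ (Nat.fib (n+2) : ℝ)
  | 0 => by norm_num
  | 1 => by
    rw [pow_one]
    have h := goldenRatio_lt_two
    have : (Nat.fib 3 : ℝ) = 2 := by norm_num [show Nat.fib 3 = 2 by decide]
    linarith
  | (n+2) => by
    have h1 := pow_le_fib n
    have h2 := pow_le_fib (n+1)
    have hpow : goldenRatio ^ (n+2) = goldenRatio ^ (n+1) + goldenRatio ^ n := by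
      have := goldenRatio_sq
      calc goldenRatio ^ (n+2) = goldenRatio ^ n * goldenRatio ^ 2 := by ring
        _ = goldenRatio ^ n * (goldenRatio + 1) := by rw [this]
        _ = goldenRatio ^ (n+1) + goldenRatio ^ n := by ring
    have hf : (Nat.fib (n+4) : ℝ) = (Nat.fib (n+2) : ℝ) + (Nat.fib (n+3) : ℝ) := by
      have : Nat.fib (n + 2 + 2) = Nat.fib (n+2) + Nat.fib (n+3) := by
        rw [Nat.fib_add_two (n := n + 2)]
      push_cast [show n + 4 = n + 2 + 2 from rfl, this]
      ring
    have : goldenRatio ^ (n+2) ≤ (Nat.fib (n+2) : ℝ) + (Nat.fib (n+3) : ℝ) := by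
      rw [hpow]; linarith
    linarith [hf ▸ this]

lemma fib_le_pow : ∀ n : ℕ, (Nat.fib (n+1) : ℝ) ≤ goldenRatio ^ n
  | 0 => by norm_num
  | 1 => by
    rw [pow_one]
    have h := one_lt_goldenRatio
    have : (Nat.fib 2 : ℝ) = 1 := by norm_num [show Nat.fib 2 = 1 by decide]
    linarith
  | (n+2) => by
    have h1 := fib_le_pow n
    have h2 := fib_le_pow (n+1)
    have hpow : goldenRatio ^ (n+2) = goldenRatio ^ (n+1) + goldenRatio ^ n := by
      have := goldenRatio_sq
      calc goldenRatio ^ (n+2) = goldenRatio ^ n * goldenRatio ^ 2 := by ring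
        _ = goldenRatio ^ n * (goldenRatio + 1) := by rw [this]
        _ = goldenRatio ^ (n+1) + goldenRatio ^ n := by ring
    have hf : (Nat.fib (n+3) : ℝ) = (Nat.fib (n+1) : ℝ) + (Nat.fib (n+2) : ℝ) := by
      have : Nat.fib (n + 1 + 2) = Nat.fib (n+1) + Nat.fib (n+2) := by
        rw [Nat.fib_add_two (n := n + 1)]
      push_cast [show n + 3 = n + 1 + 2 from rfl, this]
      ring
    rw [hpow, hf]
    linarith

lemma delta_real_lb (n : ℕ) : goldenRatio ^ n ≤ ((delta Dzpp n : ℕ) : ℝ) := by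
  calc goldenRatio ^ n ≤ (Nat.fib (n+2) : ℝ) := pow_le_fib n
    _ ≤ ((delta Dzpp n : ℕ) : ℝ) := by exact_mod_cast delta_lb n

lemma delta_real_ub (n : ℕ) : ((delta Dzpp n : ℕ) : ℝ) ≤ goldenRatio ^ (n+2) := by
  calc ((delta Dzpp n : ℕ) : ℝ) ≤ (Nat.fib (n+3) : ℝ) := by exact_mod_cast delta_ub n
    _ = (Nat.fib ((n+2)+1) : ℝ) := by norm_num
    _ ≤ goldenRatio ^ (n+2) := fib_le_pow (n+2)

end Aux

/-- `cap({0++}) = log₂((√5 + 1)/2)`. -/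
theorem capacity_zero_plus_plus :
    cap {[(0:ℤ), 1, 1]} = Real.logb 2 ((Real.sqrt 5 + 1) / 2) := by
  have hD : ({[(0:ℤ), 1, 1]} : Finset (List ℤ)) = Dzpp := rfl
  have hgold : (Real.sqrt 5 + 1) / 2 = Real.goldenRatio := by
    unfold Real.goldenRatio; ring
  rw [hD, hgold, cap]
  set c := Real.logb 2 Real.goldenRatio with hc
  have hcpos : 0 < c := Real.logb_pos (by norm_num) Real.one_lt_goldenRatio
  have hdpos : ∀ n : ℕ, (0:ℝ) < ((delta Dzpp n : ℕ) : ℝ) := by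
    intro n
    have h1 : (0:ℝ) < Real.goldenRatio ^ n := pow_pos Real.goldenRatio_pos n
    linarith [delta_real_lb n]
  -- squeeze
  have hlow : ∀ᶠ n : ℕ in Filter.atTop,
      c ≤ Real.logb 2 ((delta Dzpp n : ℕ)) / n := by
    rw [Filter.eventually_atTop]
    refine ⟨1, fun n hn => ?_⟩
    have hn' : (0:ℝ) < n := by exact_mod_cast hn
    rw [le_div_iff₀ hn']
    have h2 : Real.logb 2 (Real.goldenRatio ^ n) ≤ Real.logb 2 ((delta Dzpp n : ℕ)) :=
      (Real.logb_le_logb (by norm_num) (pow_pos Real.goldenRatio_pos n) (hdpos n)).mpr (delta_real_lb n)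
    rw [Real.logb_pow] at h2
    linarith [h2]
  have hhigh : ∀ᶠ n : ℕ in Filter.atTop,
      Real.logb 2 ((delta Dzpp n : ℕ)) / n ≤ ((n:ℝ) + 2) * c / n := by
    rw [Filter.eventually_atTop]
    refine ⟨1, fun n hn => ?_⟩
    have hn' : (0:ℝ) < n := by exact_mod_cast hn
    rw [div_le_div_iff₀ hn' hn']
    have h2 : Real.logb 2 ((delta Dzpp n : ℕ)) ≤ Real.logb 2 (Real.goldenRatio ^ (n+2)) :=
      (Real.logb_le_logb (by norm_num) (hdpos n) (pow_pos Real.goldenRatio_pos (n+2))).mpr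
        (delta_real_ub n)
    rw [Real.logb_pow] at h2
    have h3 : ((n + 2 : ℕ) : ℝ) = (n:ℝ) + 2 := by push_cast; ring
    rw [h3] at h2
    nlinarith [h2, hn']
  have htend_high : Filter.Tendsto (fun n : ℕ => ((n:ℝ) + 2) * c / n)
      Filter.atTop (nhds c) := by
    have h1 : Filter.Tendsto (fun n : ℕ => c + 2 * c / n) Filter.atTop (nhds (c + 0)) :=
      Filter.Tendsto.add tendsto_const_nhds
        (Filter.Tendsto.div_atTop tendsto_const_nhds tendsto_natCast_atTop_atTop)
    rw [add_zero] at h1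
    apply Filter.Tendsto.congr' ?_ h1
    rw [Filter.eventuallyEq_iff_exists_mem]
    refine ⟨{n : ℕ | 1 ≤ n}, Filter.mem_atTop 1, fun n hn => ?_⟩
    have hn' : (0:ℝ) < n := by exact_mod_cast hn
    field_simp
  have htend : Filter.Tendsto (fun n : ℕ => Real.logb 2 ((delta Dzpp n : ℕ)) / n)
      Filter.atTop (nhds c) :=
    tendsto_of_tendsto_of_tendsto_of_le_of_le' tendsto_const_nhds htend_high hlow hhigh
  exact htend.limsup_eq
end

section
/- Let D = {(0, +1, −1)} be the singleton set consisting of the pattern 0+−. Then cap(D) = log₂((√5 + 1)/2), the base-2 logarithm of the golden ratio. -/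
namespace CapAux

open List Finset Real Filter

/-- the forbidden set -/
abbrev D0 : Finset (List ℤ) := {[(0:ℤ), 1, -1]}

/-- the set whose sup is `delta` -/
def S (n : ℕ) : Set ℕ := {k : ℕ | ∃ C : Finset (List Bool),
    (∀ u ∈ C, u.length = n) ∧ AvoidsCode D0 C ∧ C.card = k}

lemma delta_eq_sSup (n : ℕ) : delta D0 n = sSup (S n) := rfl

lemma card_le_two_pow {n : ℕ} {C : Finset (List Bool)} (h : ∀ u ∈ C, u.length = n) :
    C.card ≤ 2 ^ n := by
  classical
  have : C.card ≤ (Finset.univ : Finset (Fin n → Bool)).card := by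
    apply Finset.card_le_card_of_injOn (fun u i => u.getD i.1 false)
    · intro u _; exact Finset.mem_univ _
    · intro u hu v hv huv
      apply List.ext_getElem (by rw [h u hu, h v hv])
      intro i h1 h2
      have hi : i < n := by rw [← h u hu]; exact h1
      have := congrFun huv ⟨i, hi⟩
      simpa [List.getD_eq_getElem, h1, h2] using this
  simpa using this

lemma S_nonempty (n : ℕ) : (S n).Nonempty := by
  refine ⟨1, {List.replicate n false}, ?_, ?_, ?_⟩
  · intro u hu; simp at hu; simp [hu]
  · intro u hu v hv huv
    simp at hu hv; exact absurd (hu.trans hv.symm) huv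
  · simp

lemma S_bddAbove (n : ℕ) : BddAbove (S n) := by
  refine ⟨2 ^ n, ?_⟩
  rintro k ⟨C, hlen, _, rfl⟩
  exact card_le_two_pow hlen

lemma le_delta {n k : ℕ} (hk : k ∈ S n) : k ≤ delta D0 n :=
  le_csSup (S_bddAbove n) hk

lemma delta_le {n M : ℕ} (h : ∀ k ∈ S n, k ≤ M) : delta D0 n ≤ M :=
  csSup_le (S_nonempty n) h

lemma one_mem_S (n : ℕ) : 1 ∈ S n := by
  refine ⟨{List.replicate n false}, ?_, ?_, ?_⟩
  · intro u hu; simp at hu; simp [hu]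
  · intro u hu v hv huv
    simp at hu hv; exact absurd (hu.trans hv.symm) huv
  · simp

lemma S_nonempty' (n : ℕ) : (S n).Nonempty := ⟨1, one_mem_S n⟩

lemma one_le_delta (n : ℕ) : 1 ≤ delta D0 n := le_delta (one_mem_S n)


lemma diffWord_append {u v a b : List Bool} (h : u.length = v.length) :
    diffWord (u ++ a) (v ++ b) = diffWord u v ++ diffWord a b :=
  List.zipWith_append h

lemma diffWord_cons (x y : Bool) (u v : List Bool) :
    diffWord (x :: u) (y :: v) = (boolToInt x - boolToInt y) :: diffWord u v := rfl

lemma diffWord_self_append (w : List Bool) (a b : List Bool) (hab : a.length = b.length) :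
    diffWord (w ++ a) (w ++ b) = diffWord w w ++ diffWord a b :=
  diffWord_append rfl

lemma infix_append_right {p l l' : List ℤ} (h : p <:+: l) : p <:+: l ++ l' :=
  h.trans (List.prefix_append l l').isInfix

lemma ne_nil_of_len {u : List Bool} {n : ℕ} (h : u.length = n + 1) : u ≠ [] := by
  intro hu; rw [hu] at h; simp at h

/-- dropping the last letter preserves validity -/
lemma avoids_dropLast {n : ℕ} {C : Finset (List Bool)}
    (hlen : ∀ u ∈ C, u.length = n + 1) (hav : AvoidsCode D0 C) :
    (∀ t ∈ C.image List.dropLast, t.length = n) ∧ AvoidsCode D0 (C.image List.dropLast) := by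
  classical
  constructor
  · intro t ht
    simp only [Finset.mem_image] at ht
    obtain ⟨u, hu, rfl⟩ := ht
    simp [List.length_dropLast, hlen u hu]
  · intro t ht s hs hts p hp hinf
    simp only [Finset.mem_image] at ht hs
    obtain ⟨u, hu, rfl⟩ := ht
    obtain ⟨v, hv, rfl⟩ := hs
    have huv : u ≠ v := fun h => hts (by rw [h])
    have hun := ne_nil_of_len (hlen u hu)
    have hvn := ne_nil_of_len (hlen v hv)
    have hdu := List.dropLast_append_getLast hun
    have hdv := List.dropLast_append_getLast hvn
    have hlen' : u.dropLast.length = v.dropLast.length := by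
      simp [List.length_dropLast, hlen u hu, hlen v hv]
    have : diffWord u v = diffWord u.dropLast v.dropLast ++
        diffWord [u.getLast hun] [v.getLast hvn] := by
      conv_lhs => rw [← hdu, ← hdv]
      exact diffWord_append hlen'
    exact hav u hu v hv huv p hp (this ▸ infix_append_right hinf)

lemma diffWord_pair : diffWord [true, false] [false, true] = [1, -1] := by
  simp [diffWord, boolToInt]

lemma upper_bound : ∀ n : ℕ, ∀ C : Finset (List Bool),
    (∀ u ∈ C, u.length = n) → AvoidsCode D0 C → C.card ≤ 2 * Nat.fib (n + 1) := by
  classical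
  intro n
  induction n using Nat.strong_induction_on with
  | _ n ih =>
    match n with
    | 0 => intro C hlen _; calc C.card ≤ 2 ^ 0 := card_le_two_pow hlen
                                _ ≤ 2 * Nat.fib 1 := by norm_num
    | 1 => intro C hlen _; calc C.card ≤ 2 ^ 1 := card_le_two_pow hlen
                                _ ≤ 2 * Nat.fib 2 := by norm_num
    | 2 => intro C hlen _; calc C.card ≤ 2 ^ 2 := card_le_two_pow hlen
                                _ ≤ 2 * Nat.fib 3 := by norm_num [Nat.fib]
    | (m + 3) =>
      intro C hlen hav
      set C' := C.image List.dropLast with hC'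
      obtain ⟨hC'len, hC'av⟩ := avoids_dropLast hlen hav
      set B := C'.filter (fun t => (t ++ [false]) ∈ C ∧ (t ++ [true]) ∈ C) with hB
      -- every element of C is t ++ [b] for t = dropLast
      have hmem : ∀ u, ∀ hu : u ∈ C,
          u = u.dropLast ++ [u.getLast (ne_nil_of_len (hlen u hu))] :=
        fun u hu => (List.dropLast_append_getLast _).symm
      have hfib : ∀ u, ∀ hu : u ∈ C, u = u.dropLast ++ [false] ∨ u = u.dropLast ++ [true] := by
        intro u hu
        rcases Bool.eq_false_or_eq_true (u.getLast (ne_nil_of_len (hlen u hu))) with h | h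
        · right; conv_lhs => rw [hmem u hu, h]
        · left; conv_lhs => rw [hmem u hu, h]
      -- step 1 : C.card ≤ C'.card + B.card
      have step1 : C.card ≤ C'.card + B.card := by
        rw [Finset.card_eq_sum_card_image List.dropLast C]
        have hbd : ∀ t ∈ C', (C.filter (fun u => u.dropLast = t)).card ≤
            1 + (if t ∈ B then 1 else 0) := by
          intro t ht
          by_cases htB : t ∈ B
          · have hsub : C.filter (fun u => u.dropLast = t) ⊆ {t ++ [false], t ++ [true]} := by
              intro u hu
              rw [Finset.mem_filter] at hu
              obtain ⟨hu1, hu2⟩ := hu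
              rcases hfib u hu1 with h | h <;> rw [hu2] at h <;> simp [h]
            rw [if_pos htB]
            exact (Finset.card_le_card hsub).trans
              ((Finset.card_insert_le _ _).trans (by simp))
          · rw [hB, Finset.mem_filter, not_and] at htB
            have h2 := htB ht
            rw [not_and_or] at h2
            have hone : ∀ b : Bool, (t ++ [b]) ∉ C →
                C.filter (fun u => u.dropLast = t) ⊆ {t ++ [!b]} := by
              intro b hb u hu
              rw [Finset.mem_filter] at hu
              obtain ⟨hu1, hu2⟩ := hu
              rcases hfib u hu1 with h | h <;> rw [hu2] at h <;> cases b
              · exact absurd (h ▸ hu1) hb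
              · rw [Finset.mem_singleton]; exact h
              · rw [Finset.mem_singleton]; exact h
              · exact absurd (h ▸ hu1) hb
            have hle : (C.filter (fun u => u.dropLast = t)).card ≤ 1 := by
              rcases h2 with h2 | h2
              · exact (Finset.card_le_card (hone false h2)).trans (by simp)
              · exact (Finset.card_le_card (hone true h2)).trans (by simp)
            have : t ∉ B := by rw [hB, Finset.mem_filter, not_and]; exact htB
            rw [if_neg this]
            omega
        calc (∑ t ∈ C.image List.dropLast, (C.filter (fun u => u.dropLast = t)).card)
            ≤ ∑ t ∈ C', (1 + if t ∈ B then 1 else 0) := Finset.sum_le_sum hbd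
          _ = C'.card + B.card := by
              rw [Finset.sum_add_distrib, Finset.sum_const, smul_eq_mul, mul_one,
                ← Finset.card_filter]
              have hfil : C'.filter (fun t => t ∈ B) = B := by
                ext a
                rw [Finset.mem_filter]
                constructor
                · exact fun h => h.2
                · intro h; exact ⟨Finset.filter_subset _ _ h, h⟩
              rw [hfil]
      -- step 2 : dropLast is injective on B
      have hBsub : B ⊆ C' := Finset.filter_subset _ _
      have hBlen : ∀ t ∈ B, t.length = m + 2 := fun t ht => hC'len t (hBsub ht)
      have hmemB : ∀ x ∈ B, (x ++ [false]) ∈ C ∧ (x ++ [true]) ∈ C := by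
        intro x hx; rw [hB, Finset.mem_filter] at hx; exact hx.2
      have hinj : Set.InjOn List.dropLast (B : Set (List Bool)) := by
        intro t ht s hs hts
        by_contra hne
        have htn : t ≠ [] := ne_nil_of_len (hBlen t ht)
        have hsn : s ≠ [] := ne_nil_of_len (hBlen s hs)
        have hts' : t.getLast htn ≠ s.getLast hsn := by
          intro h
          apply hne
          conv_lhs => rw [← List.dropLast_append_getLast htn]
          conv_rhs => rw [← List.dropLast_append_getLast hsn]
          rw [hts, h]
        set w := t.dropLast with hw
        have hsw : s.dropLast = w := hts.symm
        have hboth : w ++ [true] ∈ B ∧ w ++ [false] ∈ B := by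
          have h1 := (List.dropLast_append_getLast htn)
          have h2 := (List.dropLast_append_getLast hsn)
          rw [hsw] at h2
          rcases Bool.eq_false_or_eq_true (t.getLast htn) with hc | hc
          · have hc' : s.getLast hsn = false := by
              rcases Bool.eq_false_or_eq_true (s.getLast hsn) with h | h
              · exact absurd (hc.trans h.symm) hts'
              · exact h
            rw [hc] at h1; rw [hc'] at h2
            exact ⟨h1 ▸ ht, h2 ▸ hs⟩
          · have hc' : s.getLast hsn = true := by
              rcases Bool.eq_false_or_eq_true (s.getLast hsn) with h | h
              · exact h
              · exact absurd (hc.trans h.symm) hts'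
            rw [hc] at h1; rw [hc'] at h2
            exact ⟨h2 ▸ hs, h1 ▸ ht⟩
        have hU : (w ++ [true]) ++ [false] ∈ C := (hmemB _ hboth.1).1
        have hV : (w ++ [false]) ++ [true] ∈ C := (hmemB _ hboth.2).2
        have hUV : (w ++ [true]) ++ [false] ≠ (w ++ [false]) ++ [true] := by
          intro h
          rw [List.append_assoc, List.append_assoc] at h
          have := List.append_cancel_left h
          simp at this
        -- w is nonempty ; w = w' ++ [a]
        have hwlen : w.length = m + 1 := by
          rw [hw, List.length_dropLast, hBlen t ht]; omega

        have hwn : w ≠ [] := ne_nil_of_len hwlen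
        have hwd := List.dropLast_append_getLast hwn
        have hdiff : diffWord ((w ++ [true]) ++ [false]) ((w ++ [false]) ++ [true])
            = diffWord w.dropLast w.dropLast ++ [0, 1, -1] := by
          rw [List.append_assoc, List.append_assoc]
          rw [diffWord_append rfl]
          conv_lhs => rw [← hwd]
          rw [diffWord_append rfl]
          have h1 : diffWord [w.getLast hwn] [w.getLast hwn] = [0] := by
            simp [diffWord]
          have h2 : diffWord ([true] ++ [false]) ([false] ++ [true]) = [1, -1] := by
            simp [diffWord, boolToInt]
          rw [h1, h2, List.append_assoc]
          rfl
        apply hav _ hU _ hV hUV [(0:ℤ), 1, -1] (Finset.mem_singleton_self _)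
        rw [hdiff]
        exact (List.suffix_append _ _).isInfix
      -- conclude by the induction hypothesis
      have hBav : AvoidsCode D0 B := fun u hu v hv => hC'av u (hBsub hu) v (hBsub hv)
      have hBlen' : ∀ u ∈ B, u.length = (m + 1) + 1 := hBlen
      obtain ⟨hB2len, hB2av⟩ := avoids_dropLast hBlen' hBav
      have hstep2 : (B.image List.dropLast).card ≤ 2 * Nat.fib (m + 2) :=
        ih (m + 1) (by omega) _ hB2len hB2av
      rw [Finset.card_image_of_injOn hinj] at hstep2
      have hstep3 : C'.card ≤ 2 * Nat.fib (m + 3) :=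
        ih (m + 2) (by omega) _ hC'len hC'av
      have hfib : Nat.fib (m + 3 + 1) = Nat.fib (m + 2) + Nat.fib (m + 3) := by
        rw [Nat.fib_add_two]
      omega

/-! ### Lower bound : an explicit code built from the pairs 00, 10, 11,
where the pair 11 may not be followed by the pair 00. -/

/-- `XY m b` : binary words of length `2*m` that are concatenations of the pairs
`00`, `10`, `11`, contain no occurrence of the pair `11` followed by the pair `00`,
and (if `b = true`) do not start with the pair `00`. -/
def XY : ℕ → Bool → Finset (List Bool)
  | 0, _ => {[]}
  | m + 1, b =>
      ((XY m false).image (fun w => true :: false :: w) ∪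
        (XY m true).image (fun w => true :: true :: w)) ∪
      (if b then ∅ else (XY m false).image (fun w => false :: false :: w))

lemma mem_XY_succ {m : ℕ} {b : Bool} {u : List Bool} :
    u ∈ XY (m + 1) b ↔ (∃ w ∈ XY m false, u = true :: false :: w) ∨
      (∃ w ∈ XY m true, u = true :: true :: w) ∨
      (b = false ∧ ∃ w ∈ XY m false, u = false :: false :: w) := by
  cases b <;>
    simp [XY, Finset.mem_union, Finset.mem_image, eq_comm, and_comm, or_assoc]

lemma XY_length : ∀ (m : ℕ) (b : Bool), ∀ u ∈ XY m b, u.length = 2 * m := by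
  intro m
  induction m with
  | zero => intro b u hu; simp [XY] at hu; simp [hu]
  | succ m ih =>
    intro b u hu
    rw [mem_XY_succ] at hu
    rcases hu with ⟨w, hw, rfl⟩ | ⟨w, hw, rfl⟩ | ⟨-, w, hw, rfl⟩ <;>
      simp [ih _ _ hw] <;> ring

lemma XY_head : ∀ (m : ℕ), ∀ u ∈ XY m true, ∀ x l, u = x :: l → x = true := by
  intro m
  cases m with
  | zero => intro u hu x l hxl; simp [XY] at hu; rw [hu] at hxl; simp at hxl
  | succ m =>
    intro u hu x l hxl
    rw [mem_XY_succ] at hu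
    rcases hu with ⟨w, hw, rfl⟩ | ⟨w, hw, rfl⟩ | ⟨h, -⟩
    · simp at hxl; exact hxl.1
    · simp at hxl; exact hxl.1
    · simp at h

/-- The key relation : no `+1` immediately followed by `-1`. -/
def R : ℤ → ℤ → Prop := fun a c => ¬(a = 1 ∧ c = -1)

lemma chain_XY : ∀ (m : ℕ) (b b' : Bool) (u v : List Bool),
    u ∈ XY m b → v ∈ XY m b' → ∀ z : ℤ,
    (z = 1 → ∀ x l, u = x :: l → x = true) →
    List.Chain' R (z :: diffWord u v) := by
  intro m
  induction m with
  | zero =>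
    intro b b' u v hu hv z _
    simp [XY] at hu hv
    rw [hu, hv]
    exact List.isChain_singleton z
  | succ m ih =>
    intro b b' u v hu hv z hz
    rw [mem_XY_succ] at hu hv
    -- extract the first pair of u and of v
    obtain ⟨p0, p1, u', bu, hflagu, hueq, hp0, hp11⟩ :
        ∃ (p0 p1 : Bool) (u' : List Bool) (bu : Bool), u' ∈ XY m bu ∧
          u = p0 :: p1 :: u' ∧ ¬(p0 = false ∧ p1 = true) ∧
          (p1 = true → ∀ x l, u' = x :: l → x = true) := by
      rcases hu with ⟨w, hw, rfl⟩ | ⟨w, hw, rfl⟩ | ⟨-, w, hw, rfl⟩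
      · exact ⟨true, false, w, false, hw, rfl, by simp, by simp⟩
      · exact ⟨true, true, w, true, hw, rfl, by simp, fun _ => XY_head m w hw⟩
      · exact ⟨false, false, w, false, hw, rfl, by simp, by simp⟩
    obtain ⟨q0, q1, v', bv, hflagv, hveq, hq⟩ :
        ∃ (q0 q1 : Bool) (v' : List Bool) (bv : Bool), v' ∈ XY m bv ∧
          v = q0 :: q1 :: v' ∧ ¬(q0 = false ∧ q1 = true) := by
      rcases hv with ⟨w, hw, rfl⟩ | ⟨w, hw, rfl⟩ | ⟨-, w, hw, rfl⟩
      · exact ⟨true, false, w, false, hw, rfl, by simp⟩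
      · exact ⟨true, true, w, true, hw, rfl, by simp⟩
      · exact ⟨false, false, w, false, hw, rfl, by simp⟩
    rw [hueq, hveq]
    show List.IsChain R _
    rw [diffWord_cons, diffWord_cons, List.isChain_cons_cons, List.isChain_cons_cons]
    refine ⟨?_, ?_, ?_⟩
    · -- R z (p0 - q0)
      rintro ⟨hz1, hd0⟩
      have hp0t : p0 = true := hz (by exact_mod_cast hz1) p0 (p1 :: u') hueq
      rw [hp0t] at hd0
      cases q0 <;> simp [boolToInt] at hd0
    · -- R (p0 - q0) (p1 - q1)
      rintro ⟨hd0, hd1⟩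
      have hq0 : q0 = false := by cases p0 <;> cases q0 <;> simp [boolToInt] at hd0 ⊢
      have hq1 : q1 = true := by cases p1 <;> cases q1 <;> simp [boolToInt] at hd1 ⊢
      exact hq ⟨hq0, hq1⟩
    · -- Chain' R ((p1 - q1) :: diffWord u' v')
      apply ih bu bv u' v' hflagu hflagv
      intro hd1
      have hp1 : p1 = true := by cases p1 <;> cases q1 <;> simp [boolToInt] at hd1 ⊢
      exact hp11 hp1

lemma no_pattern_of_chain {d : List ℤ} (h : List.Chain' R d) : ¬ [(0:ℤ), 1, -1] <:+: d := by
  intro hinf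
  have h2 := h.infix hinf
  rw [List.isChain_cons_cons, List.isChain_cons_cons] at h2
  exact h2.2.1 ⟨rfl, rfl⟩

lemma avoids_XY (m : ℕ) : AvoidsCode D0 (XY m false) := by
  intro u hu v hv _ p hp
  rw [Finset.mem_singleton] at hp; subst hp
  have hch := chain_XY m false false u v hu hv 0 (by simp)
  exact no_pattern_of_chain hch.tail

lemma avoids_XY_odd (m : ℕ) :
    AvoidsCode D0 ((XY m false).image (fun w => false :: w)) := by
  intro u hu v hv _ p hp
  rw [Finset.mem_singleton] at hp; subst hp
  simp only [Finset.mem_image] at hu hv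
  obtain ⟨u', hu', rfl⟩ := hu
  obtain ⟨v', hv', rfl⟩ := hv
  have hd : diffWord (false :: u') (false :: v') = 0 :: diffWord u' v' := by
    rw [diffWord_cons]; norm_num [boolToInt]
  rw [hd]
  exact no_pattern_of_chain (chain_XY m false false u' v' hu' hv' 0 (by simp))

lemma XY_card_rec (m : ℕ) :
    (XY (m + 1) true).card = (XY m false).card + (XY m true).card ∧
    (XY (m + 1) false).card = 2 * (XY m false).card + (XY m true).card := by
  classical
  have hinj : ∀ a b : Bool, Function.Injective (fun w : List Bool => a :: b :: w) :=
    fun a b w w' h => by simpa using h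
  have hd1 : Disjoint ((XY m false).image (fun w => true :: false :: w))
      ((XY m true).image (fun w => true :: true :: w)) := by
    rw [Finset.disjoint_left]
    rintro x hx hy
    simp only [Finset.mem_image] at hx hy
    obtain ⟨w, _, rfl⟩ := hx
    obtain ⟨w', _, h⟩ := hy
    simp at h
  have hd2 : Disjoint (((XY m false).image (fun w => true :: false :: w)) ∪
      ((XY m true).image (fun w => true :: true :: w)))
      ((XY m false).image (fun w => false :: false :: w)) := by
    rw [Finset.disjoint_left]
    rintro x hx hy
    simp only [Finset.mem_union, Finset.mem_image] at hx hy
    obtain ⟨w, _, rfl⟩ := hy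
    rcases hx with ⟨w', _, h⟩ | ⟨w', _, h⟩ <;> simp at h
  have hcu : (((XY m false).image (fun w => true :: false :: w)) ∪
      ((XY m true).image (fun w => true :: true :: w))).card
      = (XY m false).card + (XY m true).card := by
    rw [Finset.card_union_of_disjoint hd1,
      Finset.card_image_of_injective _ (hinj true false),
      Finset.card_image_of_injective _ (hinj true true)]
  constructor
  · show ((((XY m false).image (fun w => true :: false :: w)) ∪
      ((XY m true).image (fun w => true :: true :: w))) ∪ (if true then ∅ else _)).card = _
    rw [if_pos rfl, Finset.union_empty, hcu]
  · show ((((XY m false).image (fun w => true :: false :: w)) ∪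
      ((XY m true).image (fun w => true :: true :: w))) ∪
      (if false then ∅ else (XY m false).image (fun w => false :: false :: w))).card = _
    rw [if_neg (by simp), Finset.card_union_of_disjoint hd2, hcu,
      Finset.card_image_of_injective _ (hinj false false)]
    ring

/-- The golden ratio. -/
noncomputable def Gr : ℝ := (Real.sqrt 5 + 1) / 2

lemma sqrt5_sq : Real.sqrt 5 ^ 2 = 5 := Real.sq_sqrt (by norm_num)

lemma sqrt5_ge : (2 : ℝ) ≤ Real.sqrt 5 := by
  nlinarith [sqrt5_sq, Real.sqrt_nonneg 5]

lemma sqrt5_le : Real.sqrt 5 ≤ 3 := by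
  nlinarith [sqrt5_sq, Real.sqrt_nonneg 5]

lemma Gr_sq : Gr ^ 2 = Gr + 1 := by
  rw [Gr]; nlinarith [sqrt5_sq]

lemma one_le_Gr : 1 ≤ Gr := by rw [Gr]; nlinarith [sqrt5_ge]

lemma Gr_le_two : Gr ≤ 2 := by rw [Gr]; nlinarith [sqrt5_le]

lemma Gr_pos : 0 < Gr := lt_of_lt_of_le one_pos one_le_Gr

lemma XY_card_lower : ∀ m : ℕ, Gr ^ (2 * m) ≤ ((XY m false).card : ℝ) ∧
    Gr ^ (2 * m + 1) ≤ (((XY m false).card : ℝ) + ((XY m true).card : ℝ)) := by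
  intro m
  induction m with
  | zero =>
    constructor
    · simp [XY]
    · have : (XY 0 false).card = 1 := by simp [XY]
      have h2 : (XY 0 true).card = 1 := by simp [XY]
      rw [this, h2]
      rw [mul_zero, pow_one]
      push_cast
      linarith [Gr_le_two]
  | succ m ih =>
    obtain ⟨ihx, ihxy⟩ := ih
    obtain ⟨hy, hx⟩ := XY_card_rec m
    have e1 : Gr ^ (2 * (m + 1)) = Gr ^ (2 * m + 1) + Gr ^ (2 * m) := by
      rw [show 2 * (m + 1) = (2 * m) + 2 from by ring, pow_add, Gr_sq,
        pow_succ]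
      ring
    have e2 : Gr ^ (2 * (m + 1) + 1) = Gr ^ (2 * (m + 1)) + Gr ^ (2 * m + 1) := by
      rw [show 2 * (m + 1) + 1 = (2 * m + 1) + 2 from by ring, pow_add, Gr_sq,
        show 2 * (m + 1) = (2 * m + 1) + 1 from by ring, pow_succ]
      ring
    constructor
    · rw [e1, hx]
      push_cast
      linarith
    · rw [e2, hy, hx, e1]
      push_cast
      linarith

lemma delta_lower (n : ℕ) : Gr ^ n / 2 ≤ (delta D0 n : ℝ) := by
  rcases Nat.even_or_odd n with ⟨m, hm⟩ | ⟨m, hm⟩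
  · -- n = 2 * m
    have hm' : n = 2 * m := by omega
    subst hm'
    have hk : (XY m false).card ∈ S (2 * m) := by
      refine ⟨XY m false, ?_, avoids_XY m, rfl⟩
      intro u hu; exact XY_length m false u hu
    have h1 : ((XY m false).card : ℝ) ≤ (delta D0 (2 * m) : ℝ) := by
      exact_mod_cast le_delta hk
    have h2 := (XY_card_lower m).1
    have hpos : (0:ℝ) ≤ Gr ^ (2 * m) := le_of_lt (pow_pos Gr_pos _)
    linarith
  · -- n = 2 * m + 1
    have hC : ∀ u ∈ (XY m false).image (fun w => false :: w), u.length = n := by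
      intro u hu
      simp only [Finset.mem_image] at hu
      obtain ⟨w, hw, rfl⟩ := hu
      simp [XY_length m false w hw, hm]
    have hcard : ((XY m false).image (fun w => false :: w)).card = (XY m false).card :=
      Finset.card_image_of_injective _ (fun a b h => by simpa using h)
    have hk : (XY m false).card ∈ S n :=
      ⟨(XY m false).image (fun w => false :: w), hC, avoids_XY_odd m, hcard⟩
    have h1 : ((XY m false).card : ℝ) ≤ (delta D0 n : ℝ) := by
      exact_mod_cast le_delta hk
    have h2 := (XY_card_lower m).1
    have hpow : Gr ^ n = Gr ^ (2 * m) * Gr := by rw [hm, pow_succ]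
    have hpos : (0:ℝ) ≤ Gr ^ (2 * m) := le_of_lt (pow_pos Gr_pos _)
    have : Gr ^ n ≤ ((XY m false).card : ℝ) * 2 := by
      rw [hpow]
      nlinarith [Gr_le_two, Gr_pos]
    linarith

lemma fib_le_Gr : ∀ n : ℕ, (Nat.fib (n + 1) : ℝ) ≤ Gr ^ n := by
  intro n
  induction n using Nat.strong_induction_on with
  | _ n ih =>
    match n with
    | 0 => simp
    | 1 => simpa using one_le_Gr
    | (k + 2) =>
      have h1 := ih k (by omega)
      have h2 := ih (k + 1) (by omega)
      have hf : Nat.fib (k + 2 + 1) = Nat.fib (k + 1) + Nat.fib (k + 2) := Nat.fib_add_two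
      rw [hf]
      have e : Gr ^ (k + 2) = Gr ^ (k + 1) + Gr ^ k := by
        rw [pow_add, Gr_sq, pow_succ]; ring
      push_cast
      linarith

lemma delta_upper (n : ℕ) : (delta D0 n : ℝ) ≤ 2 * Gr ^ n := by
  have h1 : delta D0 n ≤ 2 * Nat.fib (n + 1) :=
    delta_le (by rintro k ⟨C, hlen, hav, rfl⟩; exact upper_bound n C hlen hav)
  calc (delta D0 n : ℝ) ≤ ((2 * Nat.fib (n + 1) : ℕ) : ℝ) := by exact_mod_cast h1
    _ ≤ 2 * Gr ^ n := by push_cast; linarith [fib_le_Gr n]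

lemma seq_bounds {n : ℕ} (hn : 1 ≤ n) :
    Real.logb 2 Gr - 1 / n ≤ Real.logb 2 (delta D0 n) / n ∧
    Real.logb 2 (delta D0 n) / n ≤ Real.logb 2 Gr + 1 / n := by
  have hnR : (0:ℝ) < n := by exact_mod_cast hn
  have hGpow : (0:ℝ) < Gr ^ n := pow_pos Gr_pos n
  have hlow := delta_lower n
  have hup := delta_upper n
  have hdpos : (0:ℝ) < Gr ^ n / 2 := by linarith
  have h2 : (1:ℝ) < 2 := one_lt_two
  have hlog1 : Real.logb 2 (Gr ^ n / 2) ≤ Real.logb 2 (delta D0 n) :=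
    Real.logb_le_logb_of_le h2 hdpos hlow
  have hlog2 : Real.logb 2 (delta D0 n) ≤ Real.logb 2 (2 * Gr ^ n) :=
    Real.logb_le_logb_of_le h2 (by linarith) hup
  have e1 : Real.logb 2 (Gr ^ n / 2) = n * Real.logb 2 Gr - 1 := by
    rw [Real.logb_div (ne_of_gt hGpow) (by norm_num), Real.logb_pow,
      Real.logb_self_eq_one h2]
  have e2 : Real.logb 2 (2 * Gr ^ n) = 1 + n * Real.logb 2 Gr := by
    rw [Real.logb_mul (by norm_num) (ne_of_gt hGpow), Real.logb_pow,
      Real.logb_self_eq_one h2]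
  rw [e1] at hlog1
  rw [e2] at hlog2
  constructor
  · rw [le_div_iff₀ hnR]
    have : (Real.logb 2 Gr - 1 / n) * n = n * Real.logb 2 Gr - 1 := by
      field_simp
    rw [this]
    linarith
  · rw [div_le_iff₀ hnR]
    have : (Real.logb 2 Gr + 1 / n) * n = n * Real.logb 2 Gr + 1 := by
      field_simp
    rw [this]
    linarith

lemma cap_eq : cap D0 = Real.logb 2 Gr := by
  have htends : Filter.Tendsto (fun n : ℕ => Real.logb 2 (delta D0 n) / n)
      Filter.atTop (nhds (Real.logb 2 Gr)) := by
    apply tendsto_of_tendsto_of_tendsto_of_le_of_le'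
      (g := fun n : ℕ => Real.logb 2 Gr - 1 / n)
      (h := fun n : ℕ => Real.logb 2 Gr + 1 / n)
    · simpa using (tendsto_const_nhds : Tendsto (fun _ : ℕ => Real.logb 2 Gr) atTop _).sub
        (tendsto_one_div_atTop_nhds_zero_nat (𝕜 := ℝ))
    · simpa using (tendsto_const_nhds : Tendsto (fun _ : ℕ => Real.logb 2 Gr) atTop _).add
        (tendsto_one_div_atTop_nhds_zero_nat (𝕜 := ℝ))
    · filter_upwards [Filter.eventually_ge_atTop 1] with n hn
      exact (seq_bounds hn).1
    · filter_upwards [Filter.eventually_ge_atTop 1] with n hn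
      exact (seq_bounds hn).2
  exact htends.limsup_eq

end CapAux

/-- `cap({0+-}) = log₂((√5 + 1)/2)`. -/
theorem capacity_zero_plus_minus :
    cap {[(0:ℤ), 1, -1]} = Real.logb 2 ((Real.sqrt 5 + 1) / 2) :=
  CapAux.cap_eq
end
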